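/- arXiv:1811.10157 — 4 statements merged into one kernel-verified Lean document; each statement's English description precedes it below -/
import Mathlib

section
/- Let d ≥ 2 and let δ be a directed automaton automorphism of T_d with spine spine(δ) = b_1 b_2 b_3 ⋯ ∈ Σ^ω. Then the spine is eventually periodic: there exist a finite word ι = ι_1 ι_2 ⋯ ι_s ∈ Σ* (the initial section) and a nonempty finite word π = π_1 π_2 ⋯ π_t ∈ Σ* (the periodic section) such that spine(δ) = ι π^ω, and moreover δ|_{ι π^k π_1 π_2 ⋯ π_j} = δ|_{ι π_1 π_2 ⋯ π_j} for all k, j ∈ ℕ with 0 ≤ j < t. -/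
/-- `f` is an automorphism of the `d`-regular rooted tree with vertex set `List (Fin d)`. -/
def IsTreeAut (d : ℕ) (f : List (Fin d) → List (Fin d)) : Prop :=
  Function.Bijective f ∧ f [] = [] ∧
    ∀ (u : List (Fin d)) (a : Fin d), ∃ b : Fin d, f (u ++ [a]) = f u ++ [b]

/-- The restriction `f|_u` of a tree automorphism `f` to the subtree rooted at `u`. -/
def restrictAut (d : ℕ) (f : List (Fin d) → List (Fin d)) (u : List (Fin d)) :
    List (Fin d) → List (Fin d) :=
  fun w => (f (u ++ w)).drop u.length

/-- The map on words induced by a `Σ`-automaton with permutations `σq`,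
transition function `t`, started at state `q`. -/
def autMap {d : ℕ} {Q : Type} (σq : Q → Equiv.Perm (Fin d)) (t : Q → Fin d → Q) :
    Q → List (Fin d) → List (Fin d)
  | _, [] => []
  | q, a :: w => σq q a :: autMap σq t (t q a) w

/-- `f` is induced by a finite `Σ`-automaton from some initial state. -/
def IsAutomatonAut (d : ℕ) (f : List (Fin d) → List (Fin d)) : Prop :=
  ∃ (Q : Type) (_ : Fintype Q) (σq : Q → Equiv.Perm (Fin d)) (t : Q → Fin d → Q) (v : Q),
    f = autMap σq t v

/-- `f` is finitary: all restrictions at some level `k` are trivial. -/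
def IsFinitaryFun (d : ℕ) (f : List (Fin d) → List (Fin d)) : Prop :=
  ∃ k : ℕ, ∀ u : List (Fin d), u.length = k → restrictAut d f u = id

/-- `f` is bounded: at every level, at most `N` vertices have nontrivial restriction. -/
def IsBoundedFun (d : ℕ) (f : List (Fin d) → List (Fin d)) : Prop :=
  ∃ N : ℕ, ∀ k : ℕ,
    Set.ncard {v : List (Fin d) | v.length = k ∧ restrictAut d f v ≠ id} ≤ N

/-- The length-`n` prefix of the infinite word `b`. -/
def spinePrefix {d : ℕ} (b : ℕ → Fin d) (n : ℕ) : List (Fin d) :=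
  (List.range n).map b

/-- `b` is a spine for `f`: restrictions along `b` are never finitary, while any
single-letter deviation from `b` yields a finitary restriction. -/
def IsSpine (d : ℕ) (f : List (Fin d) → List (Fin d)) (b : ℕ → Fin d) : Prop :=
  (∀ n : ℕ, ¬ IsFinitaryFun d (restrictAut d f (spinePrefix b n))) ∧
  (∀ (n : ℕ) (a : Fin d), a ≠ b n →
    IsFinitaryFun d (restrictAut d f (spinePrefix b n ++ [a])))

/-- `f` is a directed automaton automorphism. -/
def IsDirectedAut (d : ℕ) (f : List (Fin d) → List (Fin d)) : Prop :=
  IsAutomatonAut d f ∧ ¬ IsFinitaryFun d f ∧ ∃ b : ℕ → Fin d, IsSpine d f b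

/-- `k`-fold concatenation of the word `l`. -/
def repList {α : Type} (l : List α) (k : ℕ) : List α :=
  (List.replicate k l).flatten

/-- State reached by the automaton after reading a word. -/
def readState {d : ℕ} {Q : Type} (t : Q → Fin d → Q) : Q → List (Fin d) → Q
  | q, [] => q
  | q, a :: w => readState t (t q a) w

lemma autMap_append {d : ℕ} {Q : Type} (σq : Q → Equiv.Perm (Fin d)) (t : Q → Fin d → Q)
    (q : Q) (u w : List (Fin d)) :
    autMap σq t q (u ++ w) = autMap σq t q u ++ autMap σq t (readState t q u) w := by
  induction u generalizing q with
  | nil => rfl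
  | cons a u ih => simp [autMap, readState, ih]

lemma autMap_length {d : ℕ} {Q : Type} (σq : Q → Equiv.Perm (Fin d)) (t : Q → Fin d → Q)
    (q : Q) (u : List (Fin d)) : (autMap σq t q u).length = u.length := by
  induction u generalizing q with
  | nil => rfl
  | cons a u ih => simp [autMap, ih]

lemma restrict_autMap {d : ℕ} {Q : Type} (σq : Q → Equiv.Perm (Fin d)) (t : Q → Fin d → Q)
    (q : Q) (u : List (Fin d)) :
    restrictAut d (autMap σq t q) u = autMap σq t (readState t q u) := by
  funext w
  simp only [restrictAut, autMap_append]
  exact List.drop_left' (autMap_length σq t q u)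

lemma restrictAut_append (d : ℕ) (f : List (Fin d) → List (Fin d)) (u v : List (Fin d)) :
    restrictAut d f (u ++ v) = restrictAut d (restrictAut d f u) v := by
  funext w
  simp [restrictAut, List.append_assoc, List.drop_drop, Nat.add_comm]

lemma spinePrefix_succ {d : ℕ} (b : ℕ → Fin d) (n : ℕ) :
    spinePrefix b (n + 1) = spinePrefix b n ++ [b n] := by
  simp [spinePrefix, List.range_succ]

lemma spinePrefix_add {d : ℕ} (b : ℕ → Fin d) (p q : ℕ) :
    spinePrefix b (p + q) = spinePrefix b p ++ (List.range q).map (fun i => b (p + i)) := by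
  simp [spinePrefix, List.range_add, Function.comp]

lemma repList_succ' {α : Type} (l : List α) (k : ℕ) :
    repList l (k + 1) = repList l k ++ l := by
  simp [repList, List.replicate_succ', List.flatten_append]

/-- The spine of a directed automaton automorphism is eventually periodic, and
restrictions along the spine are stable under removing copies of the periodic section. -/
theorem spine_eventually_periodic (d : ℕ) (hd : 2 ≤ d)
    (δ : List (Fin d) → List (Fin d)) (hδ : IsTreeAut d δ)
    (hA : IsAutomatonAut d δ) (hnf : ¬ IsFinitaryFun d δ)
    (b : ℕ → Fin d) (hb : IsSpine d δ b) :
    ∃ ι π : List (Fin d), π ≠ [] ∧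
      (∀ k : ℕ, spinePrefix b (ι.length + k * π.length) = ι ++ repList π k) ∧
      (∀ (k j : ℕ), j < π.length →
        restrictAut d δ (ι ++ repList π k ++ π.take j) =
          restrictAut d δ (ι ++ π.take j)) := by
  obtain ⟨Q, hQ, σq, t, v, rfl⟩ := hA
  haveI : Fintype Q := hQ
  obtain ⟨m0, n0, hne, hst⟩ :=
    Finite.exists_ne_map_eq_of_infinite (fun n => readState t v (spinePrefix b n))
  obtain ⟨m, n, hmn, hstate⟩ :
      ∃ m n : ℕ, m < n ∧
        readState t v (spinePrefix b m) = readState t v (spinePrefix b n) := by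
    rcases hne.lt_or_gt with h | h
    · exact ⟨m0, n0, h, hst⟩
    · exact ⟨n0, m0, h, hst.symm⟩
  have hre : restrictAut d (autMap σq t v) (spinePrefix b m)
      = restrictAut d (autMap σq t v) (spinePrefix b n) := by
    rw [restrict_autMap, restrict_autMap, hstate]
  have step : ∀ p q : ℕ,
      restrictAut d (autMap σq t v) (spinePrefix b p)
        = restrictAut d (autMap σq t v) (spinePrefix b q) →
      b p = b q ∧
        restrictAut d (autMap σq t v) (spinePrefix b (p + 1))
          = restrictAut d (autMap σq t v) (spinePrefix b (q + 1)) := by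
    intro p q h
    have hbpq : b p = b q := by
      by_contra hne'
      have h1 : IsFinitaryFun d
          (restrictAut d (autMap σq t v) (spinePrefix b q ++ [b p])) :=
        hb.2 q (b p) hne'
      apply hb.1 (p + 1)
      rw [spinePrefix_succ, restrictAut_append, h, ← restrictAut_append]
      exact h1
    refine ⟨hbpq, ?_⟩
    rw [spinePrefix_succ, spinePrefix_succ, restrictAut_append, restrictAut_append, h, hbpq]
  have shift : ∀ i : ℕ, b (m + i) = b (n + i) ∧
      restrictAut d (autMap σq t v) (spinePrefix b (m + i))
        = restrictAut d (autMap σq t v) (spinePrefix b (n + i)) := by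
    intro i
    induction i with
    | zero => exact ⟨(step m n hre).1, hre⟩
    | succ i ih =>
      have h2 := (step _ _ ih.2).2
      exact ⟨(step _ _ h2).1, h2⟩
  set t0 : ℕ := n - m with ht0def
  have ht0 : 0 < t0 := Nat.sub_pos_of_lt hmn
  have hn : n = m + t0 := by omega
  have hbper : ∀ i, b (m + t0 + i) = b (m + i) := by
    intro i
    have := (shift i).1
    rw [hn, Nat.add_assoc] at this
    rw [Nat.add_assoc]
    exact this.symm
  have hrper : ∀ i,
      restrictAut d (autMap σq t v) (spinePrefix b (m + t0 + i))
        = restrictAut d (autMap σq t v) (spinePrefix b (m + i)) := by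
    intro i
    have := (shift i).2
    rw [hn, Nat.add_assoc] at this
    rw [Nat.add_assoc]
    exact this.symm
  have hbk : ∀ k i, b (m + k * t0 + i) = b (m + i) := by
    intro k
    induction k with
    | zero => intro i; norm_num
    | succ k ih =>
      intro i
      have harith : m + (k + 1) * t0 + i = m + t0 + (k * t0 + i) := by ring
      rw [harith, hbper, ← Nat.add_assoc, ih]
  have hrk : ∀ k i,
      restrictAut d (autMap σq t v) (spinePrefix b (m + k * t0 + i))
        = restrictAut d (autMap σq t v) (spinePrefix b (m + i)) := by
    intro k
    induction k with
    | zero => intro i; norm_num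
    | succ k ih =>
      intro i
      have harith : m + (k + 1) * t0 + i = m + t0 + (k * t0 + i) := by ring
      rw [harith, hrper, ← Nat.add_assoc, ih]
  refine ⟨spinePrefix b m, (List.range t0).map (fun i => b (m + i)), ?_, ?_, ?_⟩
  · simp [List.range_eq_nil, ht0.ne']
  · -- prefix formula
    have hιlen : (spinePrefix b m).length = m := by simp [spinePrefix]
    have hπlen : ((List.range t0).map (fun i => b (m + i))).length = t0 := by simp
    intro k
    rw [hιlen, hπlen]
    induction k with
    | zero => simp [repList, spinePrefix]
    | succ k ih =>
      have harith : m + (k + 1) * t0 = (m + k * t0) + t0 := by ring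
      have hmap : (List.range t0).map (fun i => b (m + k * t0 + i))
          = (List.range t0).map (fun i => b (m + i)) :=
        List.map_congr_left fun i _ => hbk k i
      rw [harith, spinePrefix_add, hmap, ih, repList_succ', List.append_assoc]
  · intro k j hj
    have hπlen : ((List.range t0).map (fun i => b (m + i))).length = t0 := by simp
    rw [hπlen] at hj
    have hprefix : ∀ k' : ℕ, spinePrefix b (m + k' * t0) =
        spinePrefix b m ++ repList ((List.range t0).map (fun i => b (m + i))) k' := by
      intro k'
      induction k' with
      | zero => simp [repList]
      | succ k' ih =>
        have harith : m + (k' + 1) * t0 = (m + k' * t0) + t0 := by ring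
        have hmap : (List.range t0).map (fun i => b (m + k' * t0 + i))
            = (List.range t0).map (fun i => b (m + i)) :=
          List.map_congr_left fun i _ => hbk k' i
        rw [harith, spinePrefix_add, hmap, ih, repList_succ', List.append_assoc]
    have htake : ((List.range t0).map (fun i => b (m + i))).take j
        = (List.range j).map (fun i => b (m + i)) := by
      rw [← List.map_take, List.take_range, Nat.min_eq_left hj.le]
    have hx : spinePrefix b m ++ repList ((List.range t0).map (fun i => b (m + i))) k
          ++ ((List.range t0).map (fun i => b (m + i))).take j
        = spinePrefix b (m + k * t0 + j) := by
      have hmap : (List.range j).map (fun i => b (m + k * t0 + i))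
          = (List.range j).map (fun i => b (m + i)) :=
        List.map_congr_left fun i _ => hbk k i
      rw [spinePrefix_add, hprefix, hmap, htake, List.append_assoc]
    have hy : spinePrefix b m ++ ((List.range t0).map (fun i => b (m + i))).take j
        = spinePrefix b (m + j) := by
      rw [spinePrefix_add, htake]
    rw [hx, hy]
    exact hrk k j
end

section
/- For every ET0L grammar G = (Σ, V, T, R, S) there exists a check-stack pushdown (cspd) automaton M with input alphabet Σ such that L(M) = L(G). -/
/-- `L` is a regular language: it is accepted by some DFA with finitely many states. -/
def IsRegularLang {T : Type} (L : Language T) : Prop :=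
  ∃ (Q : Type) (_ : Fintype Q) (M : DFA T Q), M.accepts = L

/-- One application of a table `ρ` (assigning to each non-terminal a set of allowed
replacement words): every occurrence of every non-terminal is replaced, independently,
by some word allowed by `ρ`; terminals are left unchanged. -/
inductive TableStep {σ V : Type} (ρ : V → Set (List (σ ⊕ V))) :
    List (σ ⊕ V) → List (σ ⊕ V) → Prop
  | nil : TableStep ρ [] []
  | term (a : σ) {u u' : List (σ ⊕ V)} :
      TableStep ρ u u' → TableStep ρ (Sum.inl a :: u) (Sum.inl a :: u')
  | nonterm (X : V) {w : List (σ ⊕ V)} (hw : w ∈ ρ X) {u u' : List (σ ⊕ V)} :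
      TableStep ρ u u' → TableStep ρ (Sum.inr X :: u) (w ++ u')

/-- Applying a sequence of tables from left to right. -/
def SeqDerives {σ V : Type} :
    List (V → Set (List (σ ⊕ V))) → List (σ ⊕ V) → List (σ ⊕ V) → Prop
  | [], u, w => u = w
  | τ :: ts, u, w => ∃ v, TableStep τ u v ∧ SeqDerives ts v w

/-- An ET0L grammar over the terminal alphabet `σ`: finitely many non-terminals `V`,
a finite set `T` of tables (each table a finite set of context-free rules containing
at least one rule for every non-terminal), a regular rational control, and a start symbol. -/
structure ET0LGrammar (σ : Type) where
  V : Type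
  finV : Fintype V
  T : Type
  finT : Fintype T
  rules : T → V → List (List (σ ⊕ V))
  rules_nonempty : ∀ (τ : T) (X : V), rules τ X ≠ []
  control : Language T
  control_regular : IsRegularLang control
  start : V

/-- The set of replacement words a table of an ET0L grammar allows for a non-terminal. -/
def ET0LGrammar.ruleSet {σ : Type} (G : ET0LGrammar σ) (τ : G.T) :
    G.V → Set (List (σ ⊕ G.V)) :=
  fun X => {w | w ∈ G.rules τ X}

/-- The language generated by an ET0L grammar. -/
def ET0LGrammar.language {σ : Type} (G : ET0LGrammar σ) : Language σ :=
  { w | ∃ ts : List G.T, ts ∈ G.control ∧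
      SeqDerives (ts.map G.ruleSet) [Sum.inr G.start] (w.map Sum.inl) }

/-- `L` is an ET0L language. -/
def IsET0L {σ : Type} (L : Language σ) : Prop :=
  ∃ G : ET0LGrammar σ, G.language = L

/-- What the two stack heads of a cspd automaton see: the bottom-of-stack symbol `♭`
on both stacks, a pair (check-stack letter, top pushdown letter), or nothing (the
`(ε,ε)` observation, allowing a blind pushable transition). -/
inductive Obs (Δ Γ : Type) where
  | bottom : Obs Δ Γ
  | pair : Δ → Γ → Obs Δ Γ
  | blind : Obs Δ Γ

/-- A check-stack pushdown (cspd) automaton with input alphabet `σ`: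
finitely many states `Q`, pushdown alphabet `Γ`, check-stack alphabet `Δ`,
a regular language of allowed check-stacks, a finite transition relation,
a start state and a set of accepting states. -/
structure CSPD (σ : Type) where
  Q : Type
  finQ : Fintype Q
  Γ : Type
  finΓ : Fintype Γ
  Δ : Type
  finΔ : Fintype Δ
  checkLang : Language Δ
  check_regular : IsRegularLang checkLang
  trans : List ((Q × Option σ × Obs Δ Γ) × (Q × List Γ))
  start : Q
  accept : Set Q

/-- `readsTo a w w'`: consuming `a` (possibly `ε`) from the input turns `w` into `w'`. -/
def readsTo {σ : Type} : Option σ → List σ → List σ → Prop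
  | none, w, w' => w = w'
  | some a, w, w' => w = a :: w'

/-- One step of a cspd automaton with (immutable) check-stack `♭u`.  A configuration
`(q, inp, pd)` records the state, the remaining input, and the pushdown contents above
`♭` (head of the list = top).  The check-stack head position is tied to the pushdown
height: with pushdown height `h > 0` it sees the `h`-th letter of `u` above `♭`. -/
inductive CStep {σ : Type} (M : CSPD σ) (u : List M.Δ) :
    (M.Q × List σ × List M.Γ) → (M.Q × List σ × List M.Γ) → Prop
  | bottom {p q : M.Q} {a : Option σ} {w : List M.Γ} {inp inp' : List σ}
      (ht : ((p, a, Obs.bottom), (q, w)) ∈ M.trans) (hr : readsTo a inp inp') :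
      CStep M u (p, inp, []) (q, inp', w)
  | pop {p q : M.Q} {a : Option σ} {d : M.Δ} {g : M.Γ} {w pd : List M.Γ}
      {inp inp' : List σ}
      (ht : ((p, a, Obs.pair d g), (q, w)) ∈ M.trans)
      (hd : u[pd.length]? = some d) (hr : readsTo a inp inp') :
      CStep M u (p, inp, g :: pd) (q, inp', w ++ pd)
  | blind {p q : M.Q} {a : Option σ} {w pd : List M.Γ} {inp inp' : List σ}
      (ht : ((p, a, Obs.blind), (q, w)) ∈ M.trans) (hr : readsTo a inp inp') :
      CStep M u (p, inp, pd) (q, inp', w ++ pd)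

/-- The language recognised by a cspd automaton: words for which some run, over some
allowed check-stack, consumes the whole input and ends in an accepting state. -/
def CSPD.lang {σ : Type} (M : CSPD σ) : Language σ :=
  { w | ∃ u ∈ M.checkLang, ∃ q ∈ M.accept, ∃ pd : List M.Γ,
      Relation.ReflTransGen (CStep M u) (M.start, w, []) (q, [], pd) }

namespace ET0LAux

open Relation

variable {σ V : Type}

lemma tableStep_nil {ρ : V → Set (List (σ ⊕ V))} : TableStep ρ [] [] := TableStep.nil

lemma tableStep_nil_iff {ρ : V → Set (List (σ ⊕ V))} {z : List (σ ⊕ V)} :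
    TableStep ρ [] z ↔ z = [] := by
  constructor
  · intro h; cases h; rfl
  · rintro rfl; exact TableStep.nil

lemma tableStep_append {ρ : V → Set (List (σ ⊕ V))} {u1 u2 z1 z2 : List (σ ⊕ V)}
    (h1 : TableStep ρ u1 z1) (h2 : TableStep ρ u2 z2) :
    TableStep ρ (u1 ++ u2) (z1 ++ z2) := by
  induction h1 with
  | nil => simpa using h2
  | term a _ ih => exact TableStep.term a ih
  | nonterm X hw _ ih => simpa [List.append_assoc] using TableStep.nonterm X hw ih

lemma tableStep_append_split {ρ : V → Set (List (σ ⊕ V))} {u1 u2 z : List (σ ⊕ V)}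
    (h : TableStep ρ (u1 ++ u2) z) :
    ∃ z1 z2, z = z1 ++ z2 ∧ TableStep ρ u1 z1 ∧ TableStep ρ u2 z2 := by
  induction u1 generalizing z with
  | nil => exact ⟨[], z, rfl, TableStep.nil, by simpa using h⟩
  | cons x u1 ih =>
    cases h with
    | term a h' =>
      obtain ⟨z1, z2, rfl, hz1, hz2⟩ := ih h'
      exact ⟨Sum.inl a :: z1, z2, rfl, TableStep.term a hz1, hz2⟩
    | nonterm X hw h' =>
      obtain ⟨z1, z2, rfl, hz1, hz2⟩ := ih h'
      exact ⟨_ ++ z1, z2, by simp, TableStep.nonterm X hw hz1, hz2⟩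

lemma seqDerives_nil_left {ds : List (V → Set (List (σ ⊕ V)))} {w : List (σ ⊕ V)} :
    SeqDerives ds [] w ↔ w = [] := by
  induction ds with
  | nil => exact ⟨fun h => h.symm, fun h => h.symm⟩
  | cons ρ ds ih =>
    constructor
    · rintro ⟨v, hv, hrest⟩
      cases hv; exact ih.mp hrest
    · rintro rfl; exact ⟨[], TableStep.nil, ih.mpr rfl⟩

lemma seqDerives_append {ds : List (V → Set (List (σ ⊕ V)))} {u1 u2 w1 w2 : List (σ ⊕ V)}
    (h1 : SeqDerives ds u1 w1) (h2 : SeqDerives ds u2 w2) :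
    SeqDerives ds (u1 ++ u2) (w1 ++ w2) := by
  induction ds generalizing u1 u2 with
  | nil => cases h1; cases h2; rfl
  | cons ρ ds ih =>
    obtain ⟨v1, hv1, hr1⟩ := h1
    obtain ⟨v2, hv2, hr2⟩ := h2
    exact ⟨v1 ++ v2, tableStep_append hv1 hv2, ih hr1 hr2⟩

lemma seqDerives_append_split {ds : List (V → Set (List (σ ⊕ V)))} {u1 u2 w : List (σ ⊕ V)}
    (h : SeqDerives ds (u1 ++ u2) w) :
    ∃ w1 w2, w = w1 ++ w2 ∧ SeqDerives ds u1 w1 ∧ SeqDerives ds u2 w2 := by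
  induction ds generalizing u1 u2 w with
  | nil => exact ⟨u1, u2, h.symm, rfl, rfl⟩
  | cons ρ ds ih =>
    obtain ⟨v, hv, hrest⟩ := h
    obtain ⟨z1, z2, rfl, hz1, hz2⟩ := tableStep_append_split hv
    obtain ⟨w1, w2, rfl, hw1, hw2⟩ := ih hrest
    exact ⟨w1, w2, rfl, ⟨z1, hz1, hw1⟩, ⟨z2, hz2, hw2⟩⟩

lemma seqDerives_cons_inl {ds : List (V → Set (List (σ ⊕ V)))} {a : σ}
    {u w : List (σ ⊕ V)} :
    SeqDerives ds (Sum.inl a :: u) w ↔ ∃ w', w = Sum.inl a :: w' ∧ SeqDerives ds u w' := by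
  induction ds generalizing u w with
  | nil =>
    constructor
    · intro h; exact ⟨u, h.symm, rfl⟩
    · rintro ⟨w', rfl, h⟩; cases h; rfl
  | cons ρ ds ih =>
    constructor
    · rintro ⟨v, hv, hrest⟩
      cases hv with
      | term _ h' =>
        obtain ⟨w', rfl, hw'⟩ := ih.mp hrest
        exact ⟨w', rfl, _, h', hw'⟩
    · rintro ⟨w', rfl, v, hv, hrest⟩
      exact ⟨Sum.inl a :: v, TableStep.term a hv, ih.mpr ⟨w', rfl, hrest⟩⟩

lemma seqDerives_cons_inr {ρ : V → Set (List (σ ⊕ V))}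
    {ds : List (V → Set (List (σ ⊕ V)))} {X : V} {u w : List (σ ⊕ V)} :
    SeqDerives (ρ :: ds) (Sum.inr X :: u) w ↔
      ∃ rw ∈ ρ X, ∃ w1 w2, w = w1 ++ w2 ∧ SeqDerives ds rw w1 ∧
        SeqDerives (ρ :: ds) u w2 := by
  constructor
  · rintro ⟨v, hv, hrest⟩
    cases hv with
    | nonterm _ hw h' =>
      obtain ⟨w1, w2, rfl, hw1, hw2⟩ := seqDerives_append_split hrest
      exact ⟨_, hw, w1, w2, rfl, hw1, _, h', hw2⟩
  · rintro ⟨rw, hrw, w1, w2, rfl, hw1, v, hv, hrest⟩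
    exact ⟨rw ++ v, TableStep.nonterm X hrw hv, seqDerives_append hw1 hrest⟩

/-- A word of terminals derives itself under any table sequence. -/
lemma seqDerives_terminal {ds : List (V → Set (List (σ ⊕ V)))} (out : List σ) :
    SeqDerives ds (out.map Sum.inl) (out.map Sum.inl) := by
  induction out with
  | nil => exact seqDerives_nil_left.mpr rfl
  | cons a out ih => exact seqDerives_cons_inl.mpr ⟨_, rfl, ih⟩

/-- `n`-step iteration of a relation. -/
def StepsN {α : Type} (r : α → α → Prop) : ℕ → α → α → Prop
  | 0, a, b => a = b
  | n + 1, a, b => ∃ c, r a c ∧ StepsN r n c b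

lemma stepsN_tail {α : Type} {r : α → α → Prop} {n : ℕ} {a b c : α}
    (h : StepsN r n a b) (hs : r b c) : StepsN r (n + 1) a c := by
  induction n generalizing a with
  | zero => cases h; exact ⟨c, hs, rfl⟩
  | succ n ih =>
    obtain ⟨d, hd, hrest⟩ := h
    exact ⟨d, hd, ih hrest⟩

lemma stepsN_of_reflTransGen {α : Type} {r : α → α → Prop} {a b : α}
    (h : Relation.ReflTransGen r a b) : ∃ n, StepsN r n a b := by
  induction h with
  | refl => exact ⟨0, rfl⟩
  | tail _ hs ih =>
    obtain ⟨n, hn⟩ := ih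
    exact ⟨n + 1, stepsN_tail hn hs⟩

lemma reflTransGen_of_stepsN {α : Type} {r : α → α → Prop} {n : ℕ} {a b : α}
    (h : StepsN r n a b) : Relation.ReflTransGen r a b := by
  induction n generalizing a with
  | zero => cases h; rfl
  | succ n ih =>
    obtain ⟨c, hc, hrest⟩ := h
    exact Relation.ReflTransGen.head hc (ih hrest)

/-- Regularity of `L·[none]` (words of `L` mapped into `Option` followed by an
end-marker). -/
lemma isRegular_marker {T : Type} {L : Language T} (h : IsRegularLang L) :
    IsRegularLang {u : List (Option T) | ∃ ts ∈ L, u = ts.map some ++ [none]} := by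
  classical
  obtain ⟨Q₀, fin₀, M₀, rfl⟩ := h
  set D : DFA (Option T) (Q₀ ⊕ Bool) :=
    { step := fun s x =>
        match s, x with
        | Sum.inl q, some τ => Sum.inl (M₀.step q τ)
        | Sum.inl q, none => Sum.inr (q ∈ M₀.accept)
        | Sum.inr _, _ => Sum.inr false
      start := Sum.inl M₀.start
      accept := {Sum.inr true} } with hD
  have hmap : ∀ (ts : List T) (q : Q₀),
      D.evalFrom (Sum.inl q) (ts.map some) = Sum.inl (M₀.evalFrom q ts) := by
    intro ts
    induction ts with
    | nil => intro q; rfl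
    | cons τ ts ih => intro q; simpa [DFA.evalFrom, hD] using ih (M₀.step q τ)
  have hdead : ∀ (l : List (Option T)) (b : Bool),
      D.evalFrom (Sum.inr b) l ∈ D.accept → l = [] ∧ b = true := by
    intro l
    induction l with
    | nil =>
      intro b hb
      simp only [DFA.evalFrom, List.foldl_nil, hD, Set.mem_singleton_iff] at hb
      exact ⟨rfl, by simpa using hb⟩
    | cons x l ih =>
      intro b hb
      have : D.evalFrom (Sum.inr false) l ∈ D.accept := by
        simpa [DFA.evalFrom, hD] using hb
      exact absurd (ih false this).2 (by simp)
  have hinv : ∀ (u : List (Option T)) (q : Q₀), D.evalFrom (Sum.inl q) u ∈ D.accept →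
      ∃ ts, u = ts.map some ++ [none] ∧ M₀.evalFrom q ts ∈ M₀.accept := by
    intro u
    induction u with
    | nil => intro q hq; simp [DFA.evalFrom, hD] at hq
    | cons x u ih =>
      intro q hq
      match x with
      | some τ =>
        have : D.evalFrom (Sum.inl (M₀.step q τ)) u ∈ D.accept := by
          simpa [DFA.evalFrom, hD] using hq
        obtain ⟨ts, rfl, hts⟩ := ih (M₀.step q τ) this
        exact ⟨τ :: ts, rfl, hts⟩
      | none =>
        have h1 : D.evalFrom (Sum.inr (decide (q ∈ M₀.accept))) u ∈ D.accept := by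
          simpa [DFA.evalFrom, hD] using hq
        obtain ⟨h2, h3⟩ := hdead u _ h1
        subst h2
        refine ⟨[], rfl, ?_⟩
        simpa [DFA.evalFrom] using of_decide_eq_true h3
  refine ⟨Q₀ ⊕ Bool, inferInstance, D, ?_⟩
  ext u
  simp only [DFA.mem_accepts]
  constructor
  · intro hu
    obtain ⟨ts, rfl, hts⟩ := hinv u M₀.start hu
    exact ⟨ts, hts, rfl⟩
  · rintro ⟨ts, hts, rfl⟩
    have h1 : D.eval (ts.map some ++ [none]) =
        D.evalFrom (Sum.inl (M₀.evalFrom M₀.start ts)) [none] := by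
      show D.evalFrom D.start _ = _
      rw [show (List.map some ts ++ [none] : List (Option T)) = List.map some ts ++ [none] from rfl, DFA.evalFrom_of_append, show (D.start : Q₀ ⊕ Bool) = Sum.inl M₀.start from rfl,
        hmap ts M₀.start]
    show D.eval _ ∈ D.accept
    rw [h1]
    have h2 : (M₀.evalFrom M₀.start ts ∈ M₀.accept) := hts
    simpa [DFA.evalFrom, hD] using h2

end ET0LAux
namespace ET0LAux

attribute [local instance] ET0LGrammar.finV ET0LGrammar.finT

variable {σ : Type} [Fintype σ]

/-- Bound on the length of right-hand sides of rules. -/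
def maxLen (G : ET0LGrammar σ) : ℕ :=
  1 + ∑ τ : G.T, ∑ X : G.V, ((G.rules τ X).map List.length).sum

lemma length_le_maxLen (G : ET0LGrammar σ) {τ : G.T} {X : G.V}
    {w : List (σ ⊕ G.V)} (hw : w ∈ G.rules τ X) : w.length ≤ maxLen G := by
  have h1 : w.length ≤ ((G.rules τ X).map List.length).sum :=
    List.le_sum_of_mem (List.mem_map_of_mem hw)
  have h2 : ((G.rules τ X).map List.length).sum ≤
      ∑ X : G.V, ((G.rules τ X).map List.length).sum :=
    Finset.single_le_sum (f := fun Y => ((G.rules τ Y).map List.length).sum)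
      (fun _ _ => Nat.zero_le _) (Finset.mem_univ X)
  have h3 : (∑ X : G.V, ((G.rules τ X).map List.length).sum) ≤
      ∑ τ : G.T, ∑ X : G.V, ((G.rules τ X).map List.length).sum :=
    Finset.single_le_sum (f := fun t => ∑ X : G.V, ((G.rules t X).map List.length).sum)
      (fun _ _ => Nat.zero_le _) (Finset.mem_univ τ)
  unfold maxLen; omega

/-- Pushdown cells : bounded-length words over `σ ⊕ V`. -/
def Cell (G : ET0LGrammar σ) : Type := {l : List (σ ⊕ G.V) // l.length ≤ maxLen G}

noncomputable instance (G : ET0LGrammar σ) : Fintype (Cell G) := by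
  classical
  apply Fintype.ofSurjective
    (f := fun p : (Σ n : Fin (maxLen G + 1), Fin n → σ ⊕ G.V) =>
      (⟨List.ofFn p.2, by simpa using Nat.lt_succ_iff.mp p.1.isLt⟩ : Cell G))
  rintro ⟨l, hl⟩
  refine ⟨⟨⟨l.length, Nat.lt_succ_of_le hl⟩, fun i => l.get i⟩, ?_⟩
  exact Subtype.ext (by simp)

def tailCell {G : ET0LGrammar σ} (c : Cell G) : Cell G :=
  ⟨c.val.tail, le_trans (by simp) c.prop⟩

def startCell (G : ET0LGrammar σ) : Cell G :=
  ⟨[Sum.inr G.start], by unfold maxLen; simp⟩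

/-- The type of transition entries of our automaton. -/
abbrev Entry (G : ET0LGrammar σ) : Type :=
  (Fin 3 × Option σ × Obs (Option G.T) (Cell G)) × (Fin 3 × List (Cell G))

/-- Transitions available when the given cell is on top of the pushdown. -/
noncomputable def cellAction (G : ET0LGrammar σ) (c : Cell G) : List (Entry G) :=
  match c.val with
  | [] => (Finset.univ : Finset (Option G.T)).toList.map
      fun d => ((1, none, Obs.pair d c), (1, []))
  | Sum.inl a :: _ => (Finset.univ : Finset (Option G.T)).toList.map
      fun d => ((1, some a, Obs.pair d c), (1, [tailCell c]))
  | Sum.inr X :: _ => (Finset.univ : Finset G.T).toList.flatMap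
      fun τ => (G.rules τ X).attach.map
        fun w => ((1, none, Obs.pair (some τ) c),
          (1, [⟨w.1, length_le_maxLen G w.2⟩, tailCell c]))

noncomputable def transList (G : ET0LGrammar σ) : List (Entry G) :=
  ((0, none, Obs.bottom), (1, [startCell G])) ::
  ((1, none, Obs.bottom), (2, [])) ::
  (Finset.univ : Finset (Cell G)).toList.flatMap (cellAction G)

/-- The cspd automaton simulating the ET0L grammar `G`. -/
@[reducible] noncomputable def machine (G : ET0LGrammar σ) : CSPD σ where
  Q := Fin 3
  finQ := inferInstance
  Γ := Cell G
  finΓ := inferInstance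
  Δ := Option G.T
  finΔ := inferInstance
  checkLang := {u | ∃ ts ∈ G.control, u = ts.map some ++ [none]}
  check_regular := isRegular_marker G.control_regular
  trans := transList G
  start := 0
  accept := {2}

end ET0LAux
namespace ET0LAux

set_option linter.unusedSectionVars false

attribute [local instance] ET0LGrammar.finV ET0LGrammar.finT

variable {σ : Type} [Fintype σ] {G : ET0LGrammar σ}

lemma mem_trans_bottom_start :
    (((0 : Fin 3), (none : Option σ), Obs.bottom), ((1 : Fin 3), [startCell G])) ∈
      transList G := by
  simp [transList]

lemma mem_trans_bottom_accept :
    (((1 : Fin 3), (none : Option σ), Obs.bottom), ((2 : Fin 3), ([] : List (Cell G)))) ∈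
      transList G := by
  simp [transList]

lemma mem_trans_pop_empty (d : Option G.T) (c : Cell G) (hc : c.val = []) :
    (((1 : Fin 3), (none : Option σ), Obs.pair d c), ((1 : Fin 3), ([] : List (Cell G)))) ∈
      transList G := by
  have : (((1 : Fin 3), (none : Option σ), Obs.pair d c), ((1 : Fin 3), ([] : List (Cell G))))
      ∈ cellAction G c := by
    unfold cellAction
    rw [hc]
    simp
  simp only [transList, List.mem_cons, List.mem_flatMap]
  exact Or.inr (Or.inr ⟨c, by simp, this⟩)

lemma mem_trans_read (d : Option G.T) (c : Cell G) (a : σ) {rest : List (σ ⊕ G.V)}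
    (hc : c.val = Sum.inl a :: rest) :
    (((1 : Fin 3), some a, Obs.pair d c), ((1 : Fin 3), [tailCell c])) ∈ transList G := by
  have : (((1 : Fin 3), some a, Obs.pair d c), ((1 : Fin 3), [tailCell c]))
      ∈ cellAction G c := by
    unfold cellAction
    rw [hc]
    simp
  simp only [transList, List.mem_cons, List.mem_flatMap]
  exact Or.inr (Or.inr ⟨c, by simp, this⟩)

lemma mem_trans_rewrite (τ : G.T) (c : Cell G) (X : G.V) {rest : List (σ ⊕ G.V)}
    (hc : c.val = Sum.inr X :: rest) {w : List (σ ⊕ G.V)} (hw : w ∈ G.rules τ X) :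
    (((1 : Fin 3), (none : Option σ), Obs.pair (some τ) c),
      ((1 : Fin 3), [⟨w, length_le_maxLen G hw⟩, tailCell c])) ∈ transList G := by
  have : (((1 : Fin 3), (none : Option σ), Obs.pair (some τ) c),
      ((1 : Fin 3), [⟨w, length_le_maxLen G hw⟩, tailCell c])) ∈ cellAction G c := by
    unfold cellAction
    rw [hc]
    simp only [List.mem_flatMap, List.mem_map, List.mem_attach]
    exact ⟨τ, by simp, ⟨w, hw⟩, trivial, rfl⟩
  simp only [transList, List.mem_cons, List.mem_flatMap]
  exact Or.inr (Or.inr ⟨c, by simp, this⟩)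

/-- Inversion for transition membership. -/
lemma trans_inv {e : Entry G} (he : e ∈ transList G) :
    e = (((0 : Fin 3), (none : Option σ), Obs.bottom), (1, [startCell G])) ∨
    e = (((1 : Fin 3), (none : Option σ), Obs.bottom), (2, [])) ∨
    (∃ d c, c.val = ([] : List (σ ⊕ G.V)) ∧
      e = ((1, none, Obs.pair d c), (1, []))) ∨
    (∃ d c a rest, c.val = Sum.inl a :: rest ∧
      e = ((1, some a, Obs.pair d c), (1, [tailCell c]))) ∨
    (∃ (τ : G.T), ∃ (c : Cell G), ∃ (X : G.V), ∃ (rest : List (σ ⊕ G.V)),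
      ∃ (w : List (σ ⊕ G.V)), ∃ (hw : w ∈ G.rules τ X),
      c.val = Sum.inr X :: rest ∧
      e = ((1, none, Obs.pair (some τ) c),
        (1, [⟨w, length_le_maxLen G hw⟩, tailCell c]))) := by
  simp only [transList, List.mem_cons, List.mem_flatMap] at he
  rcases he with rfl | rfl | ⟨c, -, hc⟩
  · exact Or.inl rfl
  · exact Or.inr (Or.inl rfl)
  · unfold cellAction at hc
    cases hval : c.val with
    | nil =>
      rw [hval] at hc
      simp only [List.mem_map] at hc
      obtain ⟨d, -, rfl⟩ := hc
      exact Or.inr (Or.inr (Or.inl ⟨d, c, hval, rfl⟩))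
    | cons x rest =>
      cases x with
      | inl a =>
        rw [hval] at hc
        simp only [List.mem_map] at hc
        obtain ⟨d, -, rfl⟩ := hc
        exact Or.inr (Or.inr (Or.inr (Or.inl ⟨d, c, a, rest, hval, rfl⟩)))
      | inr X =>
        rw [hval] at hc
        simp only [List.mem_flatMap, List.mem_map, List.mem_attach] at hc
        obtain ⟨τ, -, ⟨w, hw⟩, -, rfl⟩ := hc
        exact Or.inr (Or.inr (Or.inr (Or.inr ⟨τ, c, X, rest, w, hw, hval, rfl⟩)))

end ET0LAux
namespace ET0LAux

set_option linter.unusedSectionVars false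
set_option maxHeartbeats 1000000

attribute [local instance] ET0LGrammar.finV ET0LGrammar.finT

variable {σ : Type} [Fintype σ] {G : ET0LGrammar σ}

theorem run_of_derives (G : ET0LGrammar σ) (u : List (Option G.T))
    (ts : List G.T) (v : List (σ ⊕ G.V)) (hv : v.length ≤ maxLen G) (out : List σ)
    (pd : List (Cell G)) (inp : List σ) (r : List (Option G.T))
    (hder : SeqDerives (ts.map G.ruleSet) v (out.map Sum.inl))
    (hdrop : u.drop pd.length = ts.map some ++ r) (hr : r ≠ []) :
    Relation.ReflTransGen (CStep (machine G) u)
      (1, out ++ inp, (⟨v, hv⟩ : Cell G) :: pd) (1, inp, pd) := by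
  have hd0 : ∃ d, u[pd.length]? = some d := by
    have h1 : (u.drop pd.length)[0]? = u[pd.length]? := by
      rw [List.getElem?_drop]; simp
    rw [hdrop] at h1
    cases hts : ts.map some ++ r with
    | nil => simp [hts] at h1; cases r with
      | nil => exact absurd rfl hr
      | cons x r => simp at hts
    | cons d l => exact ⟨d, by rw [← h1, hts]; simp⟩
  match v, hv with
  | [], hv =>
    have hout : out = [] := by
      have := seqDerives_nil_left.mp hder
      simpa using this.symm
    subst hout
    obtain ⟨d, hd⟩ := hd0
    refine Relation.ReflTransGen.single ?_
    have := CStep.pop (M := machine G) (u := u) (p := 1) (q := 1) (a := none)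
      (d := d) (g := (⟨[], hv⟩ : Cell G)) (w := []) (pd := pd) (inp := inp) (inp' := inp)
      (mem_trans_pop_empty d _ rfl) hd rfl
    simpa using this
  | Sum.inl a :: v', hv =>
    obtain ⟨w', hw', hder'⟩ := seqDerives_cons_inl.mp hder
    obtain ⟨b, out', rfl, hb, hmap⟩ := List.map_eq_cons_iff.mp hw'
    obtain rfl : a = b := by simpa using hb.symm
    obtain ⟨d, hd⟩ := hd0
    have hv' : v'.length ≤ maxLen G := le_trans (Nat.le_succ _) hv
    have hstep : CStep (machine G) u (1, (a :: out') ++ inp, (⟨Sum.inl a :: v', hv⟩ : Cell G) :: pd)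
        (1, out' ++ inp, (⟨v', hv'⟩ : Cell G) :: pd) := by
      have := CStep.pop (M := machine G) (u := u) (p := 1) (q := 1) (a := some a)
        (d := d) (g := (⟨Sum.inl a :: v', hv⟩ : Cell G))
        (w := [tailCell (⟨Sum.inl a :: v', hv⟩ : Cell G)]) (pd := pd)
        (inp := (a :: out') ++ inp) (inp' := out' ++ inp)
        (mem_trans_read d _ a rfl) hd rfl
      exact this
    refine Relation.ReflTransGen.head hstep ?_
    exact run_of_derives G u ts v' hv' out' pd inp r (hmap ▸ hder') hdrop hr
  | Sum.inr X :: v', hv =>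
    match ts, hder with
    | [], hder =>
      exfalso
      have : Sum.inr X :: v' = out.map Sum.inl := hder
      cases out with
      | nil => simp at this
      | cons b out => simp at this
    | τ :: ts', hder =>
      rw [List.map_cons] at hder
      obtain ⟨rw, hrw, w1, w2, hw, hder1, hder2⟩ := seqDerives_cons_inr.mp hder
      obtain ⟨o1, o2, rfl, ho1, ho2⟩ := List.map_eq_append_iff.mp hw
      have hrw' : rw ∈ G.rules τ X := hrw
      have hv' : v'.length ≤ maxLen G := le_trans (Nat.le_succ _) hv
      have hd : u[pd.length]? = some (some τ) := by
        have h1 : (u.drop pd.length)[0]? = u[pd.length]? := by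
          rw [List.getElem?_drop]; simp
        rw [hdrop] at h1
        rw [← h1]; simp
      have hdrop' : u.drop (tailCell (⟨Sum.inr X :: v', hv⟩ : Cell G) :: pd).length =
          ts'.map some ++ r := by
        show u.drop (pd.length + 1) = _
        rw [← List.drop_drop, hdrop]
        simp
      have hstep : CStep (machine G) u
          (1, (o1 ++ o2) ++ inp, (⟨Sum.inr X :: v', hv⟩ : Cell G) :: pd)
          (1, o1 ++ (o2 ++ inp),
            (⟨rw, length_le_maxLen G hrw'⟩ : Cell G) ::
              tailCell (⟨Sum.inr X :: v', hv⟩ : Cell G) :: pd) := by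
        have := CStep.pop (M := machine G) (u := u) (p := 1) (q := 1) (a := none)
          (d := some τ) (g := (⟨Sum.inr X :: v', hv⟩ : Cell G))
          (w := [(⟨rw, length_le_maxLen G hrw'⟩ : Cell G),
            tailCell (⟨Sum.inr X :: v', hv⟩ : Cell G)]) (pd := pd)
          (inp := (o1 ++ o2) ++ inp) (inp' := (o1 ++ o2) ++ inp)
          (mem_trans_rewrite τ _ X rfl hrw') hd rfl
        rw [List.append_assoc] at this ⊢
        exact this
      refine Relation.ReflTransGen.head hstep ?_
      have run1 := run_of_derives G u ts' rw (length_le_maxLen G hrw') o1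
        (tailCell (⟨Sum.inr X :: v', hv⟩ : Cell G) :: pd) (o2 ++ inp) r
        (ho1 ▸ hder1) hdrop' hr
      have run2 := run_of_derives G u (τ :: ts') v' hv' o2 pd inp r
        (by rw [List.map_cons]; exact ho2 ▸ hder2) hdrop hr
      exact Relation.ReflTransGen.trans run1 run2
termination_by (ts.length, v.length)
decreasing_by
  all_goals simp_wf
  · exact Prod.Lex.right _ (Nat.lt_succ_self _)
  · exact Prod.Lex.left _ _ (Nat.lt_succ_self _)
  · exact Prod.Lex.right _ (Nat.lt_succ_self _)

end ET0LAux
namespace ET0LAux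

set_option linter.unusedSectionVars false
set_option maxHeartbeats 1000000

attribute [local instance] ET0LGrammar.finV ET0LGrammar.finT

variable {σ : Type} [Fintype σ] {G : ET0LGrammar σ}

lemma drop_ts_of_getElem {ts : List G.T} {m : ℕ} {τ : G.T}
    (h : (ts.map some ++ [none])[m]? = some (some τ)) :
    ts.drop m = τ :: ts.drop (m + 1) := by
  by_cases hm : m < ts.length
  · have h1 : (ts.map some ++ [none])[m]? = some (some ts[m]) := by
      rw [List.getElem?_append_left (by simpa using hm)]
      simp [List.getElem?_eq_getElem (by simpa using hm)]
    rw [h1] at h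
    have : ts[m] = τ := by simpa using h
    rw [List.drop_eq_getElem_cons hm, this]
  · exfalso
    by_cases hm2 : m = ts.length
    · subst hm2
      have : (ts.map some ++ [none])[ts.length]? = some none := by
        rw [List.getElem?_append_right (by simp)]
        simp
      rw [this] at h
      simp at h
    · have : (ts.map some ++ [none])[m]? = none := by
        apply List.getElem?_eq_none
        simp; omega
      rw [this] at h
      simp at h

theorem derives_of_run (G : ET0LGrammar σ) (ts : List G.T) (k : ℕ) (inp : List σ)
    (c : Cell G) (pd pdf : List (Cell G))
    (h : StepsN (CStep (machine G) (ts.map some ++ [none])) k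
      (1, inp, c :: pd) (2, [], pdf)) :
    ∃ out inp' j, inp = out ++ inp' ∧ j < k ∧
      StepsN (CStep (machine G) (ts.map some ++ [none])) j (1, inp', pd) (2, [], pdf) ∧
      SeqDerives ((ts.drop pd.length).map G.ruleSet) c.val (out.map Sum.inl) := by
  match k, h with
  | 0, h => exact absurd h (by simp [StepsN])
  | k + 1, h =>
    obtain ⟨cfg, hstep, hrest⟩ := h
    cases hstep with
    | pop ht hd hr =>
      rcases trans_inv ht with h1 | h1 | ⟨d', c', hc', h1⟩ | ⟨d', c', a0, rest, hc', h1⟩ |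
          ⟨τ, c', X, rest, w0, hw0, hc', h1⟩
      · simp at h1
      · simp at h1
      · -- pop an empty cell
        simp only [Prod.mk.injEq, Obs.pair.injEq] at h1
        obtain ⟨⟨-, ha, -, hcc⟩, hq, hw⟩ := h1
        subst ha hq hw
        obtain rfl : c' = c := hcc.symm
        cases hr
        refine ⟨[], inp, k, rfl, Nat.lt_succ_self _, by simpa using hrest, ?_⟩
        rw [hc']
        exact seqDerives_nil_left.mpr rfl
      · -- read a terminal
        simp only [Prod.mk.injEq, Obs.pair.injEq] at h1
        obtain ⟨⟨-, ha, -, hcc⟩, hq, hw⟩ := h1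
        subst ha hq hw
        obtain rfl : c' = c := hcc.symm
        cases hr
        obtain ⟨out2, inp', j, rfl, hj, hrun, hder⟩ :=
          derives_of_run G ts k _ (tailCell c') pd pdf (by simpa using hrest)
        refine ⟨a0 :: out2, inp', j, rfl, by omega, hrun, ?_⟩
        rw [hc']
        refine seqDerives_cons_inl.mpr ⟨out2.map Sum.inl, by simp, ?_⟩
        have : (tailCell c').val = rest := by
          show c'.val.tail = rest
          simp [hc']
        rwa [this] at hder
      · -- rewrite a non-terminal
        simp only [Prod.mk.injEq, Obs.pair.injEq] at h1
        obtain ⟨⟨-, ha, hdd, hcc⟩, hq, hw⟩ := h1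
        subst ha hq hw
        obtain rfl : c' = c := hcc.symm
        subst hdd
        cases hr
        have hdrop : ts.drop pd.length = τ :: ts.drop (pd.length + 1) :=
          drop_ts_of_getElem hd
        obtain ⟨out1, inp1, j1, rfl, hj1, hrun1, hder1⟩ :=
          derives_of_run G ts k _ ⟨w0, length_le_maxLen G hw0⟩ (tailCell c' :: pd) pdf
            hrest
        obtain ⟨out2, inp', j2, rfl, hj2, hrun2, hder2⟩ :=
          derives_of_run G ts j1 _ (tailCell c') pd pdf hrun1
        refine ⟨out1 ++ out2, inp', j2, by simp, by omega, hrun2, ?_⟩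
        rw [hc', hdrop, List.map_cons]
        have htc : (tailCell c').val = rest := by
          show c'.val.tail = rest
          simp [hc']
        refine seqDerives_cons_inr.mpr
          ⟨w0, hw0, out1.map Sum.inl, out2.map Sum.inl, by simp, ?_, ?_⟩
        · simpa using hder1
        · rw [← List.map_cons, ← hdrop, ← htc]
          exact hder2
    | blind ht hr =>
      rcases trans_inv ht with h1 | h1 | ⟨d', c', hc', h1⟩ | ⟨d', c', a0, rest, hc', h1⟩ |
          ⟨τ, c', X, rest, w0, hw0, hc', h1⟩ <;> simp at h1
termination_by k
decreasing_by
  · omega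
  · omega
  · omega

end ET0LAux
namespace ET0LAux

set_option linter.unusedSectionVars false
set_option maxHeartbeats 1000000

attribute [local instance] ET0LGrammar.finV ET0LGrammar.finT

variable {σ : Type} [Fintype σ] {G : ET0LGrammar σ}

lemma no_step_from_two {u : List (Option G.T)} {inp : List σ} {pd : List (Cell G)}
    {cfg : (Fin 3) × List σ × List (Cell G)}
    (h : CStep (machine G) u ((2 : Fin 3), inp, pd) cfg) : False := by
  cases h with
  | bottom ht hr =>
    rcases trans_inv ht with h1 | h1 | ⟨d', c', hc', h1⟩ | ⟨d', c', a0, rest, hc', h1⟩ |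
        ⟨τ, c', X, rest, w0, hw0, hc', h1⟩ <;>
      (simp only [Prod.mk.injEq] at h1; exact absurd h1.1.1 (by decide))
  | pop ht hd hr =>
    rcases trans_inv ht with h1 | h1 | ⟨d', c', hc', h1⟩ | ⟨d', c', a0, rest, hc', h1⟩ |
        ⟨τ, c', X, rest, w0, hw0, hc', h1⟩ <;>
      (simp only [Prod.mk.injEq] at h1; exact absurd h1.1.1 (by decide))
  | blind ht hr =>
    rcases trans_inv ht with h1 | h1 | ⟨d', c', hc', h1⟩ | ⟨d', c', a0, rest, hc', h1⟩ |
        ⟨τ, c', X, rest, w0, hw0, hc', h1⟩ <;>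
      (simp only [Prod.mk.injEq] at h1; exact absurd h1.1.1 (by decide))

lemma steps_from_two {u : List (Option G.T)} {j : ℕ} {inp : List σ}
    {pd pdf : List (Cell G)}
    (h : StepsN (CStep (machine G) u) j ((2 : Fin 3), inp, pd) (2, [], pdf)) :
    inp = [] ∧ pd = pdf := by
  match j, h with
  | 0, h =>
    obtain ⟨-, h2, h3⟩ : ((2 : Fin 3) = 2) ∧ inp = [] ∧ pd = pdf := by
      simpa [StepsN, Prod.ext_iff] using h
    exact ⟨h2, h3⟩
  | j + 1, h =>
    obtain ⟨cfg, hstep, -⟩ := h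
    exact absurd hstep no_step_from_two

lemma steps_from_one_empty {u : List (Option G.T)} {j : ℕ} {inp : List σ}
    {pdf : List (Cell G)}
    (h : StepsN (CStep (machine G) u) j ((1 : Fin 3), inp, ([] : List (Cell G)))
      (2, [], pdf)) :
    inp = [] := by
  match j, h with
  | 0, h =>
    exfalso
    have h' : ((1 : Fin 3), inp, ([] : List (Cell G))) = (2, [], pdf) := h
    rw [Prod.ext_iff] at h'
    have : ((1 : Fin 3)) = 2 := h'.1
    exact absurd this (by decide)
  | j + 1, h =>
    obtain ⟨cfg, hstep, hrest⟩ := h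
    cases hstep with
    | bottom ht hr =>
      rcases trans_inv ht with h1 | h1 | ⟨d', c', hc', h1⟩ | ⟨d', c', a0, rest, hc', h1⟩ |
          ⟨τ, c', X, rest, w0, hw0, hc', h1⟩
      · simp only [Prod.mk.injEq] at h1
        exact absurd h1.1.1 (by decide)
      · simp only [Prod.mk.injEq] at h1
        obtain ⟨⟨-, ha, -⟩, hq, hw⟩ := h1
        subst ha hq hw
        cases hr
        exact (steps_from_two hrest).1
      · simp at h1
      · simp at h1
      · simp at h1
    | blind ht hr =>
      rcases trans_inv ht with h1 | h1 | ⟨d', c', hc', h1⟩ | ⟨d', c', a0, rest, hc', h1⟩ |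
          ⟨τ, c', X, rest, w0, hw0, hc', h1⟩ <;> simp at h1

end ET0LAux
set_option maxHeartbeats 1000000 in
/-- For every ET0L grammar there is a cspd automaton recognising its language. -/
theorem exists_cspd_of_ET0LGrammar (σ : Type) [Fintype σ] (G : ET0LGrammar σ) :
    ∃ M : CSPD σ, M.lang = G.language := by
  classical
  open ET0LAux in
  refine ⟨machine G, ?_⟩
  ext w
  constructor
  · rintro ⟨u, hu, q, hq, pdf, hrun⟩
    obtain ⟨ts, hts, rfl⟩ := hu
    have hq2 : q = 2 := hq
    subst hq2
    obtain ⟨n, hn⟩ := stepsN_of_reflTransGen hrun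
    match n, hn with
    | 0, hn =>
      exfalso
      have h' : (((machine G).start : Fin 3), w, ([] : List (Cell G))) = (2, [], pdf) := hn
      rw [Prod.ext_iff] at h'
      have : ((0 : Fin 3)) = 2 := h'.1
      exact absurd this (by decide)
    | n + 1, hn =>
      obtain ⟨cfg, hstep, hrest⟩ := hn
      cases hstep with
      | bottom ht hr =>
        rcases trans_inv ht with h1 | h1 | ⟨d', c', hc', h1⟩ | ⟨d', c', a0, rest, hc', h1⟩ |
            ⟨τ, c', X, rest, w0, hw0, hc', h1⟩
        · simp only [Prod.mk.injEq] at h1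
          obtain ⟨⟨-, ha, -⟩, hq, hw'⟩ := h1
          subst ha hq hw'
          cases hr
          obtain ⟨out, inp', j, rfl, hj, hrun', hder⟩ :=
            derives_of_run G ts n w (startCell G) [] pdf hrest
          have hinp : inp' = [] := steps_from_one_empty hrun'
          subst hinp
          refine ⟨ts, hts, ?_⟩
          rw [List.append_nil]
          exact hder
        · simp only [Prod.mk.injEq] at h1
          have : ((0 : Fin 3)) = 1 := h1.1.1
          exact absurd this (by decide)
        · simp at h1
        · simp at h1
        · simp at h1
      | blind ht hr =>
        rcases trans_inv ht with h1 | h1 | ⟨d', c', hc', h1⟩ | ⟨d', c', a0, rest, hc', h1⟩ |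
            ⟨τ, c', X, rest, w0, hw0, hc', h1⟩ <;> simp at h1
  · rintro ⟨ts, hts, hder⟩
    refine ⟨ts.map some ++ [none], ⟨ts, hts, rfl⟩, 2, rfl, [], ?_⟩
    have hstep1 : CStep (machine G) (ts.map some ++ [none])
        ((machine G).start, w, []) (1, w, [startCell G]) :=
      CStep.bottom mem_trans_bottom_start rfl
    have hstep3 : CStep (machine G) (ts.map some ++ [none])
        (1, [], []) (2, ([] : List σ), ([] : List (Cell G))) :=
      CStep.bottom mem_trans_bottom_accept rfl
    refine Relation.ReflTransGen.head hstep1 (Relation.ReflTransGen.trans ?_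
      (Relation.ReflTransGen.single hstep3))
    have := run_of_derives G (ts.map some ++ [none]) ts [Sum.inr G.start]
      (startCell G).prop w ([] : List (Cell G)) ([] : List σ) [none] hder
      (by simp) (by simp)
    rw [List.append_nil] at this
    exact this
end

section
/- Let G = (Σ, V, T, R, S) be an extended ET0L grammar, i.e. one in which each table τ ∈ T consists of replacement rules of the form τ : X → L_{X,τ} where each L_{X,τ} ⊆ (Σ ∪ V)* is an ET0L language, and applying τ replaces each occurrence of each non-terminal X independently by an arbitrary word of L_{X,τ}. Then the language generated by G (all w ∈ Σ* derivable from S by a sequence of tables lying in R) is an ET0L language. In other words, extended ET0L grammars have no more expressive power than ET0L grammars. -/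
/-- An extended ET0L grammar: each table assigns to each non-terminal an ET0L language
of allowed replacement words over `σ ⊕ V`. -/
structure ExtET0LGrammar (σ : Type) where
  V : Type
  finV : Fintype V
  T : Type
  finT : Fintype T
  rules : T → V → Language (σ ⊕ V)
  rules_ET0L : ∀ (τ : T) (X : V), IsET0L (rules τ X)
  control : Language T
  control_regular : IsRegularLang control
  start : V

/-- The language generated by an extended ET0L grammar. -/
def ExtET0LGrammar.language {σ : Type} (G : ExtET0LGrammar σ) : Language σ :=
  { w | ∃ ts : List G.T, ts ∈ G.control ∧
      SeqDerives (ts.map G.rules) [Sum.inr G.start] (w.map Sum.inl) }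


namespace ExtProof


variable {σ V : Type} {ρ : V → Set (List (σ ⊕ V))}

lemma tableStep_nil (h : TableStep ρ ([] : List (σ ⊕ V)) z) : z = [] := by
  cases h; rfl

lemma tableStep_cons_inl {a : σ} {u z : List (σ ⊕ V)}
    (h : TableStep ρ (Sum.inl a :: u) z) :
    ∃ u', z = Sum.inl a :: u' ∧ TableStep ρ u u' := by
  cases h with
  | term _ h => exact ⟨_, rfl, h⟩

lemma tableStep_cons_inr {X : V} {u z : List (σ ⊕ V)}
    (h : TableStep ρ (Sum.inr X :: u) z) :
    ∃ w u', w ∈ ρ X ∧ z = w ++ u' ∧ TableStep ρ u u' := by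
  cases h with
  | nonterm _ hw h => exact ⟨_, _, hw, rfl, h⟩

lemma tableStep_append {u1 v1 u2 v2 : List (σ ⊕ V)} (h1 : TableStep ρ u1 v1)
    (h2 : TableStep ρ u2 v2) : TableStep ρ (u1 ++ u2) (v1 ++ v2) := by
  induction h1 with
  | nil => exact h2
  | term a _ ih => exact TableStep.term a ih
  | nonterm X hw _ ih => rw [List.append_assoc]; exact TableStep.nonterm X hw ih

lemma tableStep_append_split {u1 u2 z : List (σ ⊕ V)}
    (h : TableStep ρ (u1 ++ u2) z) :
    ∃ z1 z2, z = z1 ++ z2 ∧ TableStep ρ u1 z1 ∧ TableStep ρ u2 z2 := by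
  induction u1 generalizing z with
  | nil => exact ⟨[], z, rfl, TableStep.nil, h⟩
  | cons x u ih =>
    cases x with
    | inl a =>
      obtain ⟨u', rfl, h'⟩ := tableStep_cons_inl h
      obtain ⟨z1, z2, rfl, hz1, hz2⟩ := ih h'
      exact ⟨Sum.inl a :: z1, z2, rfl, TableStep.term a hz1, hz2⟩
    | inr X =>
      obtain ⟨w, u', hw, rfl, h'⟩ := tableStep_cons_inr h
      obtain ⟨z1, z2, rfl, hz1, hz2⟩ := ih h'
      exact ⟨w ++ z1, z2, by rw [List.append_assoc], TableStep.nonterm X hw hz1, hz2⟩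

lemma tableStep_id {z : List (σ ⊕ V)}
    (h : ∀ X, Sum.inr X ∈ z → [Sum.inr X] ∈ ρ X) : TableStep ρ z z := by
  induction z with
  | nil => exact TableStep.nil
  | cons x u ih =>
    have ih' := ih (fun X hX => h X (List.mem_cons_of_mem _ hX))
    cases x with
    | inl a => exact TableStep.term a ih'
    | inr X => exact TableStep.nonterm X (h X (List.mem_cons_self)) ih'

lemma tableStep_terminal {m : List σ} {z : List (σ ⊕ V)}
    (h : TableStep ρ (m.map Sum.inl) z) : z = m.map Sum.inl := by
  induction m generalizing z with
  | nil => exact tableStep_nil h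
  | cons a m ih =>
    obtain ⟨u', rfl, h'⟩ := tableStep_cons_inl h
    rw [ih h']; rfl

variable {cs cs1 cs2 : List (V → Set (List (σ ⊕ V)))}

lemma seqDerives_append {u w : List (σ ⊕ V)} :
    SeqDerives (cs1 ++ cs2) u w ↔ ∃ v, SeqDerives cs1 u v ∧ SeqDerives cs2 v w := by
  induction cs1 generalizing u with
  | nil =>
    constructor
    · exact fun h => ⟨u, rfl, h⟩
    · rintro ⟨v, rfl, h⟩; exact h
  | cons c cs ih =>
    constructor
    · rintro ⟨v, hv, h⟩
      obtain ⟨v', h1, h2⟩ := ih.1 h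
      exact ⟨v', ⟨v, hv, h1⟩, h2⟩
    · rintro ⟨v', ⟨v, hv, h1⟩, h2⟩
      exact ⟨v, hv, ih.2 ⟨v', h1, h2⟩⟩

lemma seqDerives_par {u1 v1 u2 v2 : List (σ ⊕ V)} (h1 : SeqDerives cs u1 v1)
    (h2 : SeqDerives cs u2 v2) : SeqDerives cs (u1 ++ u2) (v1 ++ v2) := by
  induction cs generalizing u1 u2 with
  | nil => cases h1; cases h2; rfl
  | cons c cs ih =>
    obtain ⟨m1, hm1, h1⟩ := h1
    obtain ⟨m2, hm2, h2⟩ := h2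
    exact ⟨m1 ++ m2, tableStep_append hm1 hm2, ih h1 h2⟩

lemma seqDerives_split {u1 u2 z : List (σ ⊕ V)}
    (h : SeqDerives cs (u1 ++ u2) z) :
    ∃ z1 z2, z = z1 ++ z2 ∧ SeqDerives cs u1 z1 ∧ SeqDerives cs u2 z2 := by
  induction cs generalizing u1 u2 with
  | nil => exact ⟨u1, u2, h.symm, rfl, rfl⟩
  | cons c cs ih =>
    obtain ⟨v, hv, h⟩ := h
    obtain ⟨v1, v2, rfl, hv1, hv2⟩ := tableStep_append_split hv
    obtain ⟨z1, z2, rfl, h1, h2⟩ := ih h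
    exact ⟨z1, z2, rfl, ⟨v1, hv1, h1⟩, ⟨v2, hv2, h2⟩⟩

lemma seqDerives_id {z : List (σ ⊕ V)}
    (h : ∀ c ∈ cs, ∀ X, Sum.inr X ∈ z → [Sum.inr X] ∈ c X) : SeqDerives cs z z := by
  induction cs with
  | nil => rfl
  | cons c cs ih =>
    exact ⟨z, tableStep_id (h c (List.mem_cons_self)),
      ih (fun c' hc' => h c' (List.mem_cons_of_mem _ hc'))⟩

lemma seqDerives_terminal {m : List σ} {z : List (σ ⊕ V)}
    (h : SeqDerives cs (m.map Sum.inl) z) : z = m.map Sum.inl := by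
  induction cs generalizing z with
  | nil => exact h.symm
  | cons c cs ih =>
    obtain ⟨v, hv, h⟩ := h
    rw [tableStep_terminal hv] at h
    exact ih h

lemma mem_of_tableStep {u v : List (σ ⊕ V)} {X Y : V} (h : TableStep ρ u v)
    (hX : Sum.inr X ∈ u) (hY : ∀ w ∈ ρ X, Sum.inr Y ∈ w) : Sum.inr Y ∈ v := by
  induction h with
  | nil => cases hX
  | term a _ ih =>
    rcases List.mem_cons.1 hX with h' | h'
    · cases h'
    · exact List.mem_cons_of_mem _ (ih h')
  | nonterm X' hw _ ih =>
    rcases List.mem_cons.1 hX with h' | h'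
    · cases h'
      exact List.mem_append_left _ (hY _ hw)
    · exact List.mem_append_right _ (ih h')

lemma mem_of_seqDerives {u v : List (σ ⊕ V)} {Y : V} (h : SeqDerives cs u v)
    (hY : Sum.inr Y ∈ u) (hcs : ∀ c ∈ cs, ∀ w ∈ c Y, Sum.inr Y ∈ w) :
    Sum.inr Y ∈ v := by
  induction cs generalizing u with
  | nil => cases h; exact hY
  | cons c cs ih =>
    obtain ⟨m, hm, h⟩ := h
    exact ih h (mem_of_tableStep hm hY (hcs c (List.mem_cons_self)))
      (fun c' hc' => hcs c' (List.mem_cons_of_mem _ hc'))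

lemma not_inr_mem_map_inl {w : List σ} {x : V} : Sum.inr x ∉ (w.map Sum.inl) := by
  simp

lemma all_inl_or_exists_inr (s : List (σ ⊕ V)) :
    (∃ m : List σ, s = m.map Sum.inl) ∨ ∃ A, Sum.inr A ∈ s := by
  induction s with
  | nil => exact Or.inl ⟨[], rfl⟩
  | cons x u ih =>
    cases x with
    | inl a =>
      rcases ih with ⟨m, rfl⟩ | ⟨A, hA⟩
      · exact Or.inl ⟨a :: m, rfl⟩
      · exact Or.inr ⟨A, List.mem_cons_of_mem _ hA⟩
    | inr A => exact Or.inr ⟨A, List.mem_cons_self⟩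

end ExtProof

/-! ### The construction -/

namespace ExtProof

structure RegWitness {T : Type} (L : Language T) where
  Q : Type
  fin : Fintype Q
  M : DFA T Q
  acc : M.accepts = L

noncomputable def regW {T : Type} {L : Language T} (h : IsRegularLang L) :
    RegWitness L :=
  ⟨h.choose, h.choose_spec.choose, h.choose_spec.choose_spec.choose,
    h.choose_spec.choose_spec.choose_spec⟩

section Construction

variable {σ : Type} (G : ExtET0LGrammar σ)

noncomputable def Hg (p : G.T × G.V) : ET0LGrammar (σ ⊕ G.V) :=
  (G.rules_ET0L p.1 p.2).choose

lemma Hg_lang (p : G.T × G.V) : (Hg G p).language = G.rules p.1 p.2 :=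
  (G.rules_ET0L p.1 p.2).choose_spec

noncomputable def RW : RegWitness G.control := regW G.control_regular
noncomputable def RWp (p : G.T × G.V) : RegWitness (Hg G p).control :=
  regW (Hg G p).control_regular

abbrev QR := (RW G).Q
abbrev Qp (p : G.T × G.V) := (RWp G p).Q

noncomputable instance : Fintype (QR G) := (RW G).fin
noncomputable instance (p : G.T × G.V) : Fintype (Qp G p) := (RWp G p).fin
noncomputable instance (p : G.T × G.V) : Fintype (Hg G p).V := (Hg G p).finV
noncomputable instance (p : G.T × G.V) : Fintype (Hg G p).T := (Hg G p).finT
noncomputable instance : Fintype G.V := G.finV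
noncomputable instance : Fintype G.T := G.finT

abbrev VV := G.V ⊕ (G.V ⊕ ((Σ p : G.T × G.V, (Hg G p).V) ⊕ Unit))
abbrev TT := G.T ⊕ ((G.T × G.V) ⊕ (Σ p : G.T × G.V, (Hg G p).T))

def pl (X : G.V) : VV G := Sum.inl X
def ht (X : G.V) : VV G := Sum.inr (Sum.inl X)
def sb (p : G.T × G.V) (A : (Hg G p).V) : VV G := Sum.inr (Sum.inr (Sum.inl ⟨p, A⟩))
def dd : VV G := Sum.inr (Sum.inr (Sum.inr ()))

def ini (τ : G.T) : TT G := Sum.inl τ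
def act (p : G.T × G.V) : TT G := Sum.inr (Sum.inl p)
def bdy (p : G.T × G.V) (t : (Hg G p).T) : TT G := Sum.inr (Sum.inr ⟨p, t⟩)

def emb : (σ ⊕ G.V) → (σ ⊕ VV G) := Sum.map id (pl G)

def hemb (p : G.T × G.V) : ((σ ⊕ G.V) ⊕ (Hg G p).V) → (σ ⊕ VV G)
  | Sum.inl s => emb G s
  | Sum.inr A => Sum.inr (sb G p A)

open Classical in
noncomputable def rul : TT G → VV G → List (List (σ ⊕ VV G))
  | Sum.inl _, Sum.inl X => [[Sum.inr (ht G X)]]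
  | Sum.inl _, Sum.inr _ => [[Sum.inr (dd G)]]
  | Sum.inr (Sum.inl _), Sum.inl X => [[Sum.inr (pl G X)]]
  | Sum.inr (Sum.inl p), Sum.inr (Sum.inl X) =>
      if X = p.2 then [[Sum.inr (ht G X)], [Sum.inr (sb G p (Hg G p).start)]]
      else [[Sum.inr (ht G X)]]
  | Sum.inr (Sum.inl _), Sum.inr (Sum.inr _) => [[Sum.inr (dd G)]]
  | Sum.inr (Sum.inr _), Sum.inl X => [[Sum.inr (pl G X)]]
  | Sum.inr (Sum.inr _), Sum.inr (Sum.inl X) => [[Sum.inr (ht G X)]]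
  | Sum.inr (Sum.inr ⟨p, t⟩), Sum.inr (Sum.inr (Sum.inl ⟨p', A⟩)) =>
      if h : p' = p then ((Hg G p).rules t (h ▸ A)).map (List.map (hemb G p))
      else [[Sum.inr (dd G)]]
  | Sum.inr (Sum.inr _), Sum.inr (Sum.inr (Sum.inr _)) => [[Sum.inr (dd G)]]

lemma rul_ne (l : TT G) (X : VV G) : rul G l X ≠ [] := by
  rcases l with τ | p | ⟨p, t⟩ <;>
    rcases X with X | X | ⟨p', A⟩ | u <;>
    simp only [rul] <;> try simp
  · split <;> simp
  · split
    · simp [(Hg G p).rules_nonempty]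
    · simp

-- rul unfolding lemmas
lemma rul_ini_pl (τ : G.T) (X : G.V) : rul G (ini G τ) (pl G X) = [[Sum.inr (ht G X)]] := rfl
lemma rul_ini_ht (τ : G.T) (X : G.V) : rul G (ini G τ) (ht G X) = [[Sum.inr (dd G)]] := rfl
lemma rul_ini_sb (τ : G.T) (p : G.T × G.V) (A : (Hg G p).V) :
    rul G (ini G τ) (sb G p A) = [[Sum.inr (dd G)]] := rfl
lemma rul_ini_dd (τ : G.T) : rul G (ini G τ) (dd G) = [[Sum.inr (dd G)]] := rfl
lemma rul_act_pl (p : G.T × G.V) (X : G.V) : rul G (act G p) (pl G X) = [[Sum.inr (pl G X)]] := rfl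
lemma rul_act_ht_eq (p : G.T × G.V) :
    rul G (act G p) (ht G p.2) =
      [[Sum.inr (ht G p.2)], [Sum.inr (sb G p (Hg G p).start)]] := by
  simp [rul, act, ht]
lemma rul_act_ht_mem (p : G.T × G.V) (X : G.V) :
    [Sum.inr (ht G X)] ∈ rul G (act G p) (ht G X) := by
  simp only [rul, act, ht]
  split <;> simp
lemma rul_act_ht_sub (p : G.T × G.V) (X : G.V) {w : List (σ ⊕ VV G)}
    (hw : w ∈ rul G (act G p) (ht G X)) :
    w = [Sum.inr (ht G X)] ∨ (X = p.2 ∧ w = [Sum.inr (sb G p (Hg G p).start)]) := by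
  simp only [rul, act, ht] at hw
  revert hw; split <;> rename_i h <;> simp_all [ht, sb]
lemma rul_act_sb (p p' : G.T × G.V) (A : (Hg G p').V) :
    rul G (act G p) (sb G p' A) = [[Sum.inr (dd G)]] := rfl
lemma rul_act_dd (p : G.T × G.V) : rul G (act G p) (dd G) = [[Sum.inr (dd G)]] := rfl
lemma rul_bdy_pl (p : G.T × G.V) (t : (Hg G p).T) (X : G.V) :
    rul G (bdy G p t) (pl G X) = [[Sum.inr (pl G X)]] := rfl
lemma rul_bdy_ht (p : G.T × G.V) (t : (Hg G p).T) (X : G.V) :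
    rul G (bdy G p t) (ht G X) = [[Sum.inr (ht G X)]] := rfl
lemma rul_bdy_sb_eq (p : G.T × G.V) (t : (Hg G p).T) (A : (Hg G p).V) :
    rul G (bdy G p t) (sb G p A) = ((Hg G p).rules t A).map (List.map (hemb G p)) := by
  simp [rul, bdy, sb]
lemma rul_bdy_dd (p : G.T × G.V) (t : (Hg G p).T) :
    rul G (bdy G p t) (dd G) = [[Sum.inr (dd G)]] := rfl

lemma rul_dd (l : TT G) : rul G l (dd G) = [[Sum.inr (dd G)]] := by
  rcases l with τ | p | ⟨p, t⟩ <;> rfl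

-- control DFA
abbrev QQ := ((QR G) × Option G.T) ⊕ (((Σ p : G.T × G.V, Qp G p) × QR G) ⊕ Unit)

def deadQ : QQ G := Sum.inr (Sum.inr ())
def phQ (q : QR G) (o : Option G.T) : QQ G := Sum.inl (q, o)
def bkQ (p : G.T × G.V) (s : Qp G p) (q : QR G) : QQ G := Sum.inr (Sum.inl (⟨p, s⟩, q))

open Classical in
noncomputable def ctrlStep : QQ G → TT G → QQ G
  | Sum.inl (q, _), Sum.inl τ => phQ G ((RW G).M.step q τ) (some τ)
  | Sum.inl (q, o), Sum.inr (Sum.inl p) =>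
      if o = some p.1 then bkQ G p (RWp G p).M.start q else deadQ G
  | Sum.inl _, Sum.inr (Sum.inr _) => deadQ G
  | Sum.inr (Sum.inl (⟨p, s⟩, q)), Sum.inl τ =>
      if s ∈ (RWp G p).M.accept then phQ G ((RW G).M.step q τ) (some τ) else deadQ G
  | Sum.inr (Sum.inl (⟨p, s⟩, q)), Sum.inr (Sum.inl p') =>
      if s ∈ (RWp G p).M.accept ∧ p'.1 = p.1 then bkQ G p' (RWp G p').M.start q
      else deadQ G
  | Sum.inr (Sum.inl (⟨p, s⟩, q)), Sum.inr (Sum.inr ⟨p', t⟩) =>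
      if h : p = p' then bkQ G p' ((RWp G p').M.step (h ▸ s) t) q else deadQ G
  | Sum.inr (Sum.inr _), _ => deadQ G

def ctrlAccept : Set (QQ G) :=
  { st | match st with
    | Sum.inl (q, _) => q ∈ (RW G).M.accept
    | Sum.inr (Sum.inl (⟨p, s⟩, q)) => s ∈ (RWp G p).M.accept ∧ q ∈ (RW G).M.accept
    | Sum.inr (Sum.inr _) => False }

noncomputable def ctrlDFA : DFA (TT G) (QQ G) :=
  ⟨ctrlStep G, phQ G (RW G).M.start none, ctrlAccept G⟩

noncomputable def GG : ET0LGrammar σ where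
  V := VV G
  finV := inferInstance
  T := TT G
  finT := inferInstance
  rules := rul G
  rules_nonempty := rul_ne G
  control := (ctrlDFA G).accepts
  control_regular := ⟨QQ G, inferInstance, ctrlDFA G, rfl⟩
  start := pl G G.start

end Construction
end ExtProof

/-! ### Simulation relations and one-step lemmas -/

namespace ExtProof
section Main

variable {σ : Type} (G : ExtET0LGrammar σ)

/-- The rule sets of the constructed grammar. -/
def rset (l : TT G) : VV G → Set (List (σ ⊕ VV G)) := fun X => {w | w ∈ rul G l X}

lemma GG_ruleSet : (GG G).ruleSet = rset G := rfl

def isBlk : TT G → Prop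
  | Sum.inl _ => False
  | _ => True

lemma rul_blk_pl {l : TT G} (hb : isBlk G l) (X : G.V) :
    rul G l (pl G X) = [[Sum.inr (pl G X)]] := by
  rcases l with τ | p | ⟨p, t⟩
  · cases hb
  · rfl
  · rfl

lemma rul_blk_ht_mem {l : TT G} (hb : isBlk G l) (X : G.V) :
    [Sum.inr (ht G X)] ∈ rul G l (ht G X) := by
  rcases l with τ | p | ⟨p, t⟩
  · cases hb
  · exact rul_act_ht_mem G p X
  · exact List.mem_singleton.2 rfl

def hatify : List (σ ⊕ G.V) → List (σ ⊕ VV G) := List.map (Sum.map id (ht G))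

lemma mem_map_emb {m : List (σ ⊕ G.V)} {Y : VV G} (h : Sum.inr Y ∈ m.map (emb G)) :
    ∃ X, Y = pl G X := by
  simp only [List.mem_map] at h
  obtain ⟨x, _, hx⟩ := h
  cases x with
  | inl a => cases hx
  | inr X => exact ⟨X, (Sum.inr.inj hx).symm⟩

lemma map_emb_eq_map_inl {v : List (σ ⊕ G.V)} {w : List σ}
    (h : v.map (emb G) = w.map Sum.inl) : v = w.map Sum.inl := by
  induction v generalizing w with
  | nil => cases w with | nil => rfl | cons => cases h
  | cons x v ih =>
    cases w with
    | nil => cases h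
    | cons a w =>
      simp only [List.map_cons, List.cons.injEq] at h ⊢
      cases x with
      | inl b => exact ⟨Sum.inl.inj h.1 ▸ rfl, ih h.2⟩
      | inr X => cases h.1

lemma map_hemb_inl (p : G.T × G.V) (m : List (σ ⊕ G.V)) :
    (m.map Sum.inl).map (hemb G p) = m.map (emb G) := by
  rw [List.map_map]; rfl

/-- identity step on an embedded word, for block letters -/
lemma emb_id_inv {l : TT G} (hb : isBlk G l) {m : List (σ ⊕ G.V)}
    {y : List (σ ⊕ VV G)} (h : TableStep (rset G l) (m.map (emb G)) y) :
    y = m.map (emb G) := by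
  induction m generalizing y with
  | nil => exact tableStep_nil h
  | cons x m ih =>
    cases x with
    | inl a =>
      obtain ⟨u', rfl, h'⟩ := tableStep_cons_inl h
      rw [ih h']; rfl
    | inr X =>
      obtain ⟨w, u', hw, rfl, h'⟩ := tableStep_cons_inr h
      have : w ∈ rul G l (pl G X) := hw
      rw [rul_blk_pl G hb] at this
      rw [List.mem_singleton] at this
      subst this
      rw [ih h']
      rfl

lemma emb_id_fwd {l : TT G} (hb : isBlk G l) (m : List (σ ⊕ G.V)) :
    TableStep (rset G l) (m.map (emb G)) (m.map (emb G)) := by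
  apply tableStep_id
  intro Y hY
  obtain ⟨X, rfl⟩ := mem_map_emb G hY
  show _ ∈ rul G l (pl G X)
  rw [rul_blk_pl G hb]
  exact List.mem_singleton.2 rfl

lemma hatify_id_fwd {l : TT G} (hb : isBlk G l) (u : List (σ ⊕ G.V)) :
    TableStep (rset G l) (hatify G u) (hatify G u) := by
  apply tableStep_id
  intro Y hY
  simp only [hatify, List.mem_map] at hY
  obtain ⟨x, _, hx⟩ := hY
  cases x with
  | inl a => cases hx
  | inr X =>
    cases Sum.inr.inj hx
    exact rul_blk_ht_mem G hb X

/-- the `ini` table on an embedded word: forced, yields `hatify` -/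
lemma ini_emb_inv {τ : G.T} {m : List (σ ⊕ G.V)} {y : List (σ ⊕ VV G)}
    (h : TableStep (rset G (ini G τ)) (m.map (emb G)) y) : y = hatify G m := by
  induction m generalizing y with
  | nil => exact tableStep_nil h
  | cons x m ih =>
    cases x with
    | inl a =>
      obtain ⟨u', rfl, h'⟩ := tableStep_cons_inl h
      rw [ih h']; rfl
    | inr X =>
      obtain ⟨w, u', hw, rfl, h'⟩ := tableStep_cons_inr h
      have : w ∈ rul G (ini G τ) (pl G X) := hw
      rw [rul_ini_pl, List.mem_singleton] at this
      subst this
      rw [ih h']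
      rfl

lemma ini_emb_fwd (τ : G.T) (m : List (σ ⊕ G.V)) :
    TableStep (rset G (ini G τ)) (m.map (emb G)) (hatify G m) := by
  induction m with
  | nil => exact TableStep.nil
  | cons x m ih =>
    cases x with
    | inl a => exact TableStep.term a ih
    | inr X =>
      have hw : [Sum.inr (ht G X)] ∈ rul G (ini G τ) (pl G X) :=
        List.mem_singleton.2 rfl
      exact TableStep.nonterm (pl G X) hw ih

/-- simulation of one table of a sub-grammar, forward -/
lemma hsim_fwd {p : G.T × G.V} {t : (Hg G p).T}
    {s s' : List ((σ ⊕ G.V) ⊕ (Hg G p).V)} (h : TableStep ((Hg G p).ruleSet t) s s') :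
    TableStep (rset G (bdy G p t)) (s.map (hemb G p)) (s'.map (hemb G p)) := by
  induction h with
  | nil => exact TableStep.nil
  | term c _ ih =>
    cases c with
    | inl a => exact TableStep.term a ih
    | inr Y =>
      have hw : [Sum.inr (pl G Y)] ∈ rul G (bdy G p t) (pl G Y) :=
        List.mem_singleton.2 rfl
      exact TableStep.nonterm (pl G Y) hw ih
  | nonterm A hw _ ih =>
    rw [List.map_append]
    refine TableStep.nonterm (sb G p A) ?_ ih
    show _ ∈ rul G (bdy G p t) (sb G p A)
    rw [rul_bdy_sb_eq]
    exact List.mem_map_of_mem hw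

/-- simulation of one table of a sub-grammar, backward -/
lemma hsim_bwd {p : G.T × G.V} {t : (Hg G p).T}
    {s : List ((σ ⊕ G.V) ⊕ (Hg G p).V)} {z : List (σ ⊕ VV G)}
    (h : TableStep (rset G (bdy G p t)) (s.map (hemb G p)) z) :
    ∃ s', z = s'.map (hemb G p) ∧ TableStep ((Hg G p).ruleSet t) s s' := by
  induction s generalizing z with
  | nil => exact ⟨[], tableStep_nil h, TableStep.nil⟩
  | cons x s ih =>
    cases x with
    | inl c =>
      cases c with
      | inl a =>
        obtain ⟨u', rfl, h'⟩ := tableStep_cons_inl h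
        obtain ⟨s', rfl, hs'⟩ := ih h'
        exact ⟨Sum.inl (Sum.inl a) :: s', rfl, TableStep.term _ hs'⟩
      | inr Y =>
        obtain ⟨w, u', hw, rfl, h'⟩ := tableStep_cons_inr h
        have : w ∈ rul G (bdy G p t) (pl G Y) := hw
        rw [rul_bdy_pl, List.mem_singleton] at this
        subst this
        obtain ⟨s', rfl, hs'⟩ := ih h'
        exact ⟨Sum.inl (Sum.inr Y) :: s', rfl, TableStep.term _ hs'⟩
    | inr A =>
      obtain ⟨w, u', hw, rfl, h'⟩ := tableStep_cons_inr h
      have hw' : w ∈ rul G (bdy G p t) (sb G p A) := hw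
      rw [rul_bdy_sb_eq] at hw'
      obtain ⟨w0, hw0, rfl⟩ := List.mem_map.1 hw'
      obtain ⟨s', rfl, hs'⟩ := ih h'
      exact ⟨w0 ++ s', List.map_append.symm, TableStep.nonterm A hw0 hs'⟩

/-! ### Invariants -/

inductive Pend (τ : G.T) : List (σ ⊕ G.V) → List (σ ⊕ VV G) → Prop
  | nil : Pend τ [] []
  | term (a : σ) {u z} : Pend τ u z → Pend τ (Sum.inl a :: u) (Sum.inl a :: z)
  | pend (X : G.V) {u z} : Pend τ u z →
      Pend τ (Sum.inr X :: u) (Sum.inr (ht G X) :: z)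
  | done (X : G.V) {m} (hm : m ∈ G.rules τ X) {u z} : Pend τ u z →
      Pend τ (Sum.inr X :: u) (m.map (emb G) ++ z)

inductive BlockInv (p : G.T × G.V) (c0 : List (Hg G p).T) :
    List (σ ⊕ G.V) → List (σ ⊕ VV G) → Prop
  | nil : BlockInv p c0 [] []
  | term (a : σ) {u z} : BlockInv p c0 u z →
      BlockInv p c0 (Sum.inl a :: u) (Sum.inl a :: z)
  | pend (X : G.V) {u z} : BlockInv p c0 u z →
      BlockInv p c0 (Sum.inr X :: u) (Sum.inr (ht G X) :: z)
  | done (X : G.V) {m} (hm : m ∈ G.rules p.1 X) {u z} : BlockInv p c0 u z →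
      BlockInv p c0 (Sum.inr X :: u) (m.map (emb G) ++ z)
  | fly {s} (hs : SeqDerives (c0.map (Hg G p).ruleSet) [Sum.inr (Hg G p).start] s)
      {u z} : BlockInv p c0 u z →
      BlockInv p c0 (Sum.inr p.2 :: u) (s.map (hemb G p) ++ z)

lemma pend_hatify (τ : G.T) (m : List (σ ⊕ G.V)) : Pend G τ m (hatify G m) := by
  induction m with
  | nil => exact Pend.nil
  | cons x m ih =>
    cases x with
    | inl a => exact Pend.term a ih
    | inr X => exact Pend.pend X ih

lemma pend_append {τ : G.T} {u1 z1 u2 z2} (h1 : Pend G τ u1 z1)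
    (h2 : Pend G τ u2 z2) : Pend G τ (u1 ++ u2) (z1 ++ z2) := by
  induction h1 with
  | nil => exact h2
  | term a _ ih => exact Pend.term a ih
  | pend X _ ih => exact Pend.pend X ih
  | done X hm _ ih => rw [List.append_assoc]; exact Pend.done X hm ih

end Main
end ExtProof

namespace ExtProof
section Bwd

variable {σ : Type} (G : ExtET0LGrammar σ)

lemma isBlk_act (p : G.T × G.V) : isBlk G (act G p) := trivial
lemma isBlk_bdy (p : G.T × G.V) (t : (Hg G p).T) : isBlk G (bdy G p t) := trivial

lemma fly_lang {p : G.T × G.V} {c0 : List (Hg G p).T} (hc : c0 ∈ (Hg G p).control)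
    {mm : List (σ ⊕ G.V)}
    (hs : SeqDerives (c0.map (Hg G p).ruleSet) [Sum.inr (Hg G p).start] (mm.map Sum.inl)) :
    mm ∈ G.rules p.1 p.2 := by
  rw [← Hg_lang G p]
  exact ⟨c0, hc, hs⟩

lemma pend_act {τ : G.T} {p : G.T × G.V} (hp : p.1 = τ) {u z z'}
    (hP : Pend G τ u z) (h : TableStep (rset G (act G p)) z z') :
    BlockInv G p [] u z' := by
  induction hP generalizing z' with
  | nil => rw [tableStep_nil h]; exact BlockInv.nil
  | term a _ ih =>
    obtain ⟨z'', rfl, h'⟩ := tableStep_cons_inl h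
    exact BlockInv.term a (ih h')
  | pend X _ ih =>
    obtain ⟨w, z'', hw, rfl, h'⟩ := tableStep_cons_inr h
    rcases rul_act_ht_sub G p X hw with rfl | ⟨hX, rfl⟩
    · exact BlockInv.pend X (ih h')
    · subst hX
      exact BlockInv.fly (c0 := []) (s := [Sum.inr (Hg G p).start]) rfl (ih h')
  | done X hm _ ih =>
    obtain ⟨z1, z2, rfl, h1, h2⟩ := tableStep_append_split h
    rw [emb_id_inv G (isBlk_act G p) h1]
    refine BlockInv.done X ?_ (ih h2)
    rw [hp]; exact hm

lemma blockinv_bdy {p : G.T × G.V} {c0 : List (Hg G p).T} {t : (Hg G p).T}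
    {u z z'} (hB : BlockInv G p c0 u z)
    (h : TableStep (rset G (bdy G p t)) z z') :
    BlockInv G p (c0 ++ [t]) u z' := by
  induction hB generalizing z' with
  | nil => rw [tableStep_nil h]; exact BlockInv.nil
  | term a _ ih =>
    obtain ⟨z'', rfl, h'⟩ := tableStep_cons_inl h
    exact BlockInv.term a (ih h')
  | pend X _ ih =>
    obtain ⟨w, z'', hw, rfl, h'⟩ := tableStep_cons_inr h
    have hw' : w ∈ rul G (bdy G p t) (ht G X) := hw
    rw [rul_bdy_ht, List.mem_singleton] at hw'
    subst hw'
    exact BlockInv.pend X (ih h')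
  | done X hm _ ih =>
    obtain ⟨z1, z2, rfl, h1, h2⟩ := tableStep_append_split h
    rw [emb_id_inv G (isBlk_bdy G p t) h1]
    exact BlockInv.done X hm (ih h2)
  | fly hs _ ih =>
    obtain ⟨z1, z2, rfl, h1, h2⟩ := tableStep_append_split h
    obtain ⟨s', rfl, hstep⟩ := hsim_bwd G h1
    refine BlockInv.fly ?_ (ih h2)
    rw [List.map_append]
    exact seqDerives_append.2 ⟨_, hs, ⟨s', hstep, rfl⟩⟩

lemma blockinv_act {p : G.T × G.V} {c0 : List (Hg G p).T} {u z}
    (hB : BlockInv G p c0 u z) (hc : c0 ∈ (Hg G p).control) (X' : G.V) {z'}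
    (h : TableStep (rset G (act G (p.1, X'))) z z') :
    BlockInv G (p.1, X') [] u z' ∨ Sum.inr (dd G) ∈ z' := by
  induction hB generalizing z' with
  | nil => rw [tableStep_nil h]; exact Or.inl BlockInv.nil
  | term a _ ih =>
    obtain ⟨z'', rfl, h'⟩ := tableStep_cons_inl h
    rcases ih h' with hB' | hd
    · exact Or.inl (BlockInv.term a hB')
    · exact Or.inr (List.mem_cons_of_mem _ hd)
  | pend X _ ih =>
    obtain ⟨w, z'', hw, rfl, h'⟩ := tableStep_cons_inr h
    rcases ih h' with hB' | hd
    · rcases rul_act_ht_sub G (p.1, X') X hw with rfl | ⟨hX, rfl⟩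
      · exact Or.inl (BlockInv.pend X hB')
      · subst hX
        exact Or.inl (BlockInv.fly (c0 := [])
          (s := [Sum.inr (Hg G _).start]) rfl hB')
    · exact Or.inr (List.mem_append_right _ hd)
  | done X hm _ ih =>
    obtain ⟨z1, z2, rfl, h1, h2⟩ := tableStep_append_split h
    rw [emb_id_inv G (isBlk_act G _) h1]
    rcases ih h2 with hB' | hd
    · exact Or.inl (BlockInv.done (p := (p.1, X')) X hm hB')
    · exact Or.inr (List.mem_append_right _ hd)
  | @fly s hs u0 z0 _ ih =>
    obtain ⟨z1, z2, rfl, h1, h2⟩ := tableStep_append_split h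
    rcases all_inl_or_exists_inr s with ⟨mm, rfl⟩ | ⟨A, hA⟩
    · rw [map_hemb_inl] at h1
      rw [emb_id_inv G (isBlk_act G _) h1]
      rcases ih h2 with hB' | hd
      · exact Or.inl (BlockInv.done (p := (p.1, X')) p.2 (fly_lang G hc hs) hB')
      · exact Or.inr (List.mem_append_right _ hd)
    · refine Or.inr (List.mem_append_left _ ?_)
      have hA' : Sum.inr (sb G p A) ∈ s.map (hemb G p) := List.mem_map_of_mem hA
      refine mem_of_tableStep h1 hA' ?_
      intro w hw
      have hw' : w ∈ rul G (act G (p.1, X')) (sb G p A) := hw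
      rw [rul_act_sb, List.mem_singleton] at hw'
      subst hw'
      exact List.mem_singleton.2 rfl

lemma pend_ini {τ τ' : G.T} {u z z'} (hP : Pend G τ u z)
    (h : TableStep (rset G (ini G τ')) z z') :
    (∃ v, TableStep (G.rules τ) u v ∧ Pend G τ' v z') ∨ Sum.inr (dd G) ∈ z' := by
  induction hP generalizing z' with
  | nil =>
    rw [tableStep_nil h]
    exact Or.inl ⟨[], TableStep.nil, Pend.nil⟩
  | term a _ ih =>
    obtain ⟨z'', rfl, h'⟩ := tableStep_cons_inl h
    rcases ih h' with ⟨v, hv, hP'⟩ | hd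
    · exact Or.inl ⟨Sum.inl a :: v, TableStep.term a hv, Pend.term a hP'⟩
    · exact Or.inr (List.mem_cons_of_mem _ hd)
  | pend X _ ih =>
    obtain ⟨w, z'', hw, rfl, h'⟩ := tableStep_cons_inr h
    have hw' : w ∈ rul G (ini G τ') (ht G X) := hw
    rw [rul_ini_ht, List.mem_singleton] at hw'
    subst hw'
    exact Or.inr (List.mem_append_left _ (List.mem_singleton.2 rfl))
  | done X hm _ ih =>
    obtain ⟨z1, z2, rfl, h1, h2⟩ := tableStep_append_split h
    rw [ini_emb_inv G h1]
    rcases ih h2 with ⟨v, hv, hP'⟩ | hd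
    · exact Or.inl ⟨_ ++ v, TableStep.nonterm X hm hv,
        pend_append G (pend_hatify G τ' _) hP'⟩
    · exact Or.inr (List.mem_append_right _ hd)

lemma blockinv_ini {p : G.T × G.V} {c0 : List (Hg G p).T} {u z}
    (hB : BlockInv G p c0 u z) (hc : c0 ∈ (Hg G p).control) (τ' : G.T) {z'}
    (h : TableStep (rset G (ini G τ')) z z') :
    (∃ v, TableStep (G.rules p.1) u v ∧ Pend G τ' v z') ∨ Sum.inr (dd G) ∈ z' := by
  induction hB generalizing z' with
  | nil =>
    rw [tableStep_nil h]
    exact Or.inl ⟨[], TableStep.nil, Pend.nil⟩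
  | term a _ ih =>
    obtain ⟨z'', rfl, h'⟩ := tableStep_cons_inl h
    rcases ih h' with ⟨v, hv, hP'⟩ | hd
    · exact Or.inl ⟨Sum.inl a :: v, TableStep.term a hv, Pend.term a hP'⟩
    · exact Or.inr (List.mem_cons_of_mem _ hd)
  | pend X _ ih =>
    obtain ⟨w, z'', hw, rfl, h'⟩ := tableStep_cons_inr h
    have hw' : w ∈ rul G (ini G τ') (ht G X) := hw
    rw [rul_ini_ht, List.mem_singleton] at hw'
    subst hw'
    exact Or.inr (List.mem_append_left _ (List.mem_singleton.2 rfl))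
  | done X hm _ ih =>
    obtain ⟨z1, z2, rfl, h1, h2⟩ := tableStep_append_split h
    rw [ini_emb_inv G h1]
    rcases ih h2 with ⟨v, hv, hP'⟩ | hd
    · exact Or.inl ⟨_ ++ v, TableStep.nonterm X hm hv,
        pend_append G (pend_hatify G τ' _) hP'⟩
    · exact Or.inr (List.mem_append_right _ hd)
  | @fly s hs u0 z0 _ ih =>
    obtain ⟨z1, z2, rfl, h1, h2⟩ := tableStep_append_split h
    rcases all_inl_or_exists_inr s with ⟨mm, rfl⟩ | ⟨A, hA⟩
    · rw [map_hemb_inl] at h1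
      rw [ini_emb_inv G h1]
      rcases ih h2 with ⟨v, hv, hP'⟩ | hd
      · exact Or.inl ⟨mm ++ v, TableStep.nonterm p.2 (fly_lang G hc hs) hv,
          pend_append G (pend_hatify G τ' mm) hP'⟩
      · exact Or.inr (List.mem_append_right _ hd)
    · refine Or.inr (List.mem_append_left _ ?_)
      have hA' : Sum.inr (sb G p A) ∈ s.map (hemb G p) := List.mem_map_of_mem hA
      refine mem_of_tableStep h1 hA' ?_
      intro w hw
      have hw' : w ∈ rul G (ini G τ') (sb G p A) := hw
      rw [rul_ini_sb, List.mem_singleton] at hw'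
      subst hw'
      exact List.mem_singleton.2 rfl

lemma pend_terminal {τ : G.T} {u z} (hP : Pend G τ u z)
    (hz : ∀ x ∈ z, ∃ a : σ, x = Sum.inl a) :
    ∃ v, TableStep (G.rules τ) u v ∧ v.map (emb G) = z := by
  induction hP with
  | nil => exact ⟨[], TableStep.nil, rfl⟩
  | term a _ ih =>
    obtain ⟨v, hv, hz'⟩ := ih (fun x hx => hz x (List.mem_cons_of_mem _ hx))
    exact ⟨Sum.inl a :: v, TableStep.term a hv, by rw [List.map_cons, hz']; rfl⟩
  | pend X _ _ =>
    obtain ⟨a, ha⟩ := hz _ (List.mem_cons_self)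
    cases ha
  | done X hm _ ih =>
    obtain ⟨v, hv, hz'⟩ := ih (fun x hx => hz x (List.mem_append_right _ hx))
    exact ⟨_ ++ v, TableStep.nonterm X hm hv, by rw [List.map_append, hz']⟩

lemma blockinv_terminal {p : G.T × G.V} {c0 : List (Hg G p).T} {u z}
    (hB : BlockInv G p c0 u z) (hc : c0 ∈ (Hg G p).control)
    (hz : ∀ x ∈ z, ∃ a : σ, x = Sum.inl a) :
    ∃ v, TableStep (G.rules p.1) u v ∧ v.map (emb G) = z := by
  induction hB with
  | nil => exact ⟨[], TableStep.nil, rfl⟩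
  | term a _ ih =>
    obtain ⟨v, hv, hz'⟩ := ih (fun x hx => hz x (List.mem_cons_of_mem _ hx))
    exact ⟨Sum.inl a :: v, TableStep.term a hv, by rw [List.map_cons, hz']; rfl⟩
  | pend X _ _ =>
    obtain ⟨a, ha⟩ := hz _ (List.mem_cons_self)
    cases ha
  | done X hm _ ih =>
    obtain ⟨v, hv, hz'⟩ := ih (fun x hx => hz x (List.mem_append_right _ hx))
    exact ⟨_ ++ v, TableStep.nonterm X hm hv, by rw [List.map_append, hz']⟩
  | @fly s hs u0 z0 _ ih =>
    rcases all_inl_or_exists_inr s with ⟨mm, rfl⟩ | ⟨A, hA⟩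
    · obtain ⟨v, hv, hz'⟩ := ih (fun x hx => hz x (List.mem_append_right _ hx))
      refine ⟨mm ++ v, TableStep.nonterm p.2 (fly_lang G hc hs) hv, ?_⟩
      rw [List.map_append, hz', map_hemb_inl]
    · obtain ⟨a, ha⟩ := hz _ (List.mem_append_left _ (List.mem_map_of_mem hA))
      cases ha

lemma no_dd {cs : List (TT G)} {z z' : List (σ ⊕ VV G)} {w : List σ}
    (h : SeqDerives (cs.map (rset G)) z z') (hd : Sum.inr (dd G) ∈ z)
    (hz' : z' = w.map Sum.inl) : False := by
  have hmem : Sum.inr (dd G) ∈ z' := by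
    refine mem_of_seqDerives h hd ?_
    intro c hc w' hw'
    obtain ⟨l, _, rfl⟩ := List.mem_map.1 hc
    have hw'' : w' ∈ rul G l (dd G) := hw'
    rw [rul_dd, List.mem_singleton] at hw''
    subst hw''
    exact List.mem_singleton.2 rfl
  rw [hz'] at hmem
  exact not_inr_mem_map_inl hmem

end Bwd
end ExtProof

namespace ExtProof
section Grand

variable {σ : Type} (G : ExtET0LGrammar σ)

lemma evalFrom_dead (c : List (TT G)) :
    (ctrlDFA G).evalFrom (deadQ G) c = deadQ G := by
  induction c with
  | nil => rfl
  | cons l c ih =>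
    show (ctrlDFA G).evalFrom ((ctrlDFA G).step (deadQ G) l) c = _
    have h : (ctrlDFA G).step (deadQ G) l = deadQ G := rfl
    rw [h, ih]

lemma dead_not_acc {c : List (TT G)}
    (h : (ctrlDFA G).evalFrom (deadQ G) c ∈ (ctrlDFA G).accept) : False := by
  rw [evalFrom_dead] at h
  exact h

def InvSt : QQ G → List (σ ⊕ G.V) → List (σ ⊕ VV G) → Prop
  | Sum.inl (_, none), u, z => z = u.map (emb G)
  | Sum.inl (_, some τ), u, z => Pend G τ u z
  | Sum.inr (Sum.inl (⟨p, s⟩, _)), u, z =>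
      ∃ c0, (RWp G p).M.evalFrom (RWp G p).M.start c0 = s ∧ BlockInv G p c0 u z
  | Sum.inr (Sum.inr _), _, _ => False

noncomputable def qOf : QQ G → QR G
  | Sum.inl (q, _) => q
  | Sum.inr (Sum.inl (_, q)) => q
  | Sum.inr (Sum.inr _) => (RW G).M.start

noncomputable def phOf : QQ G → Option G.T
  | Sum.inl (_, o) => o
  | Sum.inr (Sum.inl (⟨p, _⟩, _)) => some p.1
  | _ => none

lemma all_inl_of_eq_map {α β : Type} {z : List (α ⊕ β)} {w : List α}
    (h : z = w.map Sum.inl) : ∀ x ∈ z, ∃ a, x = Sum.inl a := by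
  subst h
  intro x hx
  obtain ⟨a, _, rfl⟩ := List.mem_map.1 hx
  exact ⟨a, rfl⟩

lemma c0_mem_control {p : G.T × G.V} {c0 : List (Hg G p).T} {s : Qp G p}
    (he : (RWp G p).M.evalFrom (RWp G p).M.start c0 = s)
    (hs : s ∈ (RWp G p).M.accept) : c0 ∈ (Hg G p).control := by
  rw [← (RWp G p).acc, DFA.mem_accepts]
  show (RWp G p).M.evalFrom _ c0 ∈ _
  rw [he]
  exact hs

open Classical in
lemma grand (w : List σ) :
    ∀ (c : List (TT G)) (st : QQ G) (u : List (σ ⊕ G.V)) (z : List (σ ⊕ VV G)),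
      InvSt G st u z →
      SeqDerives (c.map (rset G)) z (w.map Sum.inl) →
      (ctrlDFA G).evalFrom st c ∈ (ctrlDFA G).accept →
      ∃ ts : List G.T, (RW G).M.evalFrom (qOf G st) ts ∈ (RW G).M.accept ∧
        SeqDerives (((phOf G st).toList ++ ts).map G.rules) u (w.map Sum.inl) := by
  intro c
  induction c with
  | nil =>
    rintro st u z hI hseq hacc
    have hz : z = w.map Sum.inl := hseq
    rcases st with ⟨q, _ | τ⟩ | ⟨⟨p, s⟩, q⟩ | x
    · have hz' : z = u.map (emb G) := hI
      have hu : u = w.map Sum.inl := map_emb_eq_map_inl G (by rw [← hz', hz])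
      exact ⟨[], hacc, hu⟩
    · obtain ⟨v, hv, hev⟩ := pend_terminal G hI (all_inl_of_eq_map hz)
      have hveq : v = w.map Sum.inl := map_emb_eq_map_inl G (by rw [hev, hz])
      exact ⟨[], hacc, ⟨v, hv, hveq⟩⟩
    · obtain ⟨c0, he, hB⟩ := hI
      have hs : s ∈ (RWp G p).M.accept := (hacc : _ ∧ _).1
      have hq : q ∈ (RW G).M.accept := (hacc : _ ∧ _).2
      obtain ⟨v, hv, hev⟩ := blockinv_terminal G hB (c0_mem_control G he hs)
        (all_inl_of_eq_map hz)
      have hveq : v = w.map Sum.inl := map_emb_eq_map_inl G (by rw [hev, hz])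
      exact ⟨[], hq, ⟨v, hv, hveq⟩⟩
    · exact absurd hI (by simp [InvSt])
  | cons l c ih =>
    rintro st u z hI hseq hacc
    obtain ⟨z₁, hstep, hrest⟩ := hseq
    have hacc' : (ctrlDFA G).evalFrom ((ctrlDFA G).step st l) c ∈ (ctrlDFA G).accept :=
      hacc
    rcases st with ⟨q, o⟩ | ⟨⟨p, s⟩, q⟩ | x
    · rcases l with τ | p' | ⟨p', t⟩
      · -- ini τ
        have hstq : (ctrlDFA G).step (Sum.inl (q, o)) (Sum.inl τ) =
            phQ G ((RW G).M.step q τ) (some τ) := rfl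
        rw [hstq] at hacc'
        rcases o with _ | τ₀
        · have hz' : z = u.map (emb G) := hI
          subst hz'
          have hP : Pend G τ u z₁ := (ini_emb_inv G hstep) ▸ pend_hatify G τ u
          obtain ⟨ts, hts, hder⟩ :=
            ih (phQ G ((RW G).M.step q τ) (some τ)) u z₁ hP hrest hacc'
          exact ⟨τ :: ts, hts, hder⟩
        · rcases pend_ini G hI hstep with ⟨v, hv, hP⟩ | hd
          · obtain ⟨ts, hts, hder⟩ :=
              ih (phQ G ((RW G).M.step q τ) (some τ)) v z₁ hP hrest hacc'
            exact ⟨τ :: ts, hts, ⟨v, hv, hder⟩⟩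
          · exact (no_dd G hrest hd rfl).elim
      · -- act p'
        rcases o with _ | τ₀
        · have hstq : (ctrlDFA G).step (Sum.inl (q, none)) (Sum.inr (Sum.inl p')) =
              if (none : Option G.T) = some p'.1 then bkQ G p' (RWp G p').M.start q
              else deadQ G := rfl
          rw [if_neg (by simp)] at hstq
          rw [hstq] at hacc'
          exact (dead_not_acc G hacc').elim
        · have hstq : (ctrlDFA G).step (Sum.inl (q, some τ₀)) (Sum.inr (Sum.inl p')) =
              if some τ₀ = some p'.1 then bkQ G p' (RWp G p').M.start q
              else deadQ G := rfl
          by_cases hpt : p'.1 = τ₀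
          · rw [if_pos (by rw [hpt])] at hstq
            rw [hstq] at hacc'
            have hB : BlockInv G p' [] u z₁ := pend_act G hpt hI hstep
            obtain ⟨ts, hts, hder⟩ := ih (bkQ G p' (RWp G p').M.start q) u z₁
              ⟨[], rfl, hB⟩ hrest hacc'
            rw [show (phOf G (bkQ G p' (RWp G p').M.start q)) = some p'.1 from rfl,
              hpt] at hder
            exact ⟨ts, hts, hder⟩
          · rw [if_neg (by simpa using fun h => hpt h.symm)] at hstq
            rw [hstq] at hacc'
            exact (dead_not_acc G hacc').elim
      · -- bdy
        have hstq : (ctrlDFA G).step (Sum.inl (q, o)) (Sum.inr (Sum.inr ⟨p', t⟩)) =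
            deadQ G := rfl
        rw [hstq] at hacc'
        exact (dead_not_acc G hacc').elim
    · -- in-block state
      obtain ⟨c0, he, hB⟩ := hI
      rcases l with τ | p' | ⟨p', t⟩
      · -- ini τ
        have hstq : (ctrlDFA G).step (Sum.inr (Sum.inl (⟨p, s⟩, q))) (Sum.inl τ) =
            if s ∈ (RWp G p).M.accept then phQ G ((RW G).M.step q τ) (some τ)
            else deadQ G := rfl
        by_cases hs : s ∈ (RWp G p).M.accept
        · rw [if_pos hs] at hstq
          rw [hstq] at hacc'
          rcases blockinv_ini G hB (c0_mem_control G he hs) τ hstep with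
            ⟨v, hv, hP⟩ | hd
          · obtain ⟨ts, hts, hder⟩ :=
              ih (phQ G ((RW G).M.step q τ) (some τ)) v z₁ hP hrest hacc'
            exact ⟨τ :: ts, hts, ⟨v, hv, hder⟩⟩
          · exact (no_dd G hrest hd rfl).elim
        · rw [if_neg hs] at hstq
          rw [hstq] at hacc'
          exact (dead_not_acc G hacc').elim
      · -- act p'
        have hstq : (ctrlDFA G).step (Sum.inr (Sum.inl (⟨p, s⟩, q))) (Sum.inr (Sum.inl p')) =
            if s ∈ (RWp G p).M.accept ∧ p'.1 = p.1 then bkQ G p' (RWp G p').M.start q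
            else deadQ G := rfl
        by_cases hcond : s ∈ (RWp G p).M.accept ∧ p'.1 = p.1
        · rw [if_pos hcond] at hstq
          rw [hstq] at hacc'
          obtain ⟨hs, hp'⟩ := hcond
          have hp'' : p' = (p.1, p'.2) := by rw [← hp']
          have hstep₂ : TableStep (rset G (act G (p.1, p'.2))) z z₁ := by
            rw [← hp'']
            exact hstep
          rcases blockinv_act G hB (c0_mem_control G he hs) p'.2 hstep₂ with hB' | hd
          · have hB'' : BlockInv G p' [] u z₁ := by rw [hp'']; exact hB'
            obtain ⟨ts, hts, hder⟩ := ih (bkQ G p' (RWp G p').M.start q) u z₁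
              ⟨[], rfl, hB''⟩ hrest hacc'
            rw [show (phOf G (bkQ G p' (RWp G p').M.start q)) = some p'.1 from rfl,
              hp'] at hder
            exact ⟨ts, hts, hder⟩
          · exact (no_dd G hrest hd rfl).elim
        · rw [if_neg hcond] at hstq
          rw [hstq] at hacc'
          exact (dead_not_acc G hacc').elim
      · -- bdy p' t
        by_cases hpp : p = p'
        · subst hpp
          have hstq : (ctrlDFA G).step (Sum.inr (Sum.inl (⟨p, s⟩, q))) (Sum.inr (Sum.inr ⟨p, t⟩)) =
              if h : p = p then bkQ G p ((RWp G p).M.step (h ▸ s) t) q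
              else deadQ G := rfl
          rw [dif_pos rfl] at hstq
          rw [hstq] at hacc'
          have hB' : BlockInv G p (c0 ++ [t]) u z₁ := blockinv_bdy G hB hstep
          have he' : (RWp G p).M.evalFrom (RWp G p).M.start (c0 ++ [t]) =
              (RWp G p).M.step s t := by
            rw [DFA.evalFrom_append_singleton, he]
          obtain ⟨ts, hts, hder⟩ := ih (bkQ G p ((RWp G p).M.step s t) q) u z₁
            ⟨c0 ++ [t], he', hB'⟩ hrest hacc'
          exact ⟨ts, hts, hder⟩
        · have hstq : (ctrlDFA G).step (Sum.inr (Sum.inl (⟨p, s⟩, q))) (Sum.inr (Sum.inr ⟨p', t⟩)) =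
              if h : p = p' then bkQ G p' ((RWp G p').M.step (h ▸ s) t) q
              else deadQ G := rfl
          rw [dif_neg hpp] at hstq
          rw [hstq] at hacc'
          exact (dead_not_acc G hacc').elim
    · exact absurd hI (by simp [InvSt])

end Grand
end ExtProof

namespace ExtProof
section Fwd

variable {σ : Type} (G : ExtET0LGrammar σ)

def SGood (τ : G.T) (q : QR G) : Set (QQ G) :=
  {st | st = phQ G q (some τ) ∨
    ∃ (X : G.V) (s : Qp G (τ, X)), s ∈ (RWp G (τ, X)).M.accept ∧ st = bkQ G (τ, X) s q}

/-- identity derivations on embedded words along block letters -/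
lemma seq_id_emb {b : List (TT G)} (hb : ∀ l ∈ b, isBlk G l) (m : List (σ ⊕ G.V)) :
    SeqDerives (b.map (rset G)) (m.map (emb G)) (m.map (emb G)) := by
  refine seqDerives_id ?_
  intro c hc X hX
  obtain ⟨l, hl, rfl⟩ := List.mem_map.1 hc
  obtain ⟨X0, rfl⟩ := mem_map_emb G hX
  show _ ∈ rul G l (pl G X0)
  rw [rul_blk_pl G (hb l hl)]
  exact List.mem_singleton.2 rfl

lemma seq_id_hatify {b : List (TT G)} (hb : ∀ l ∈ b, isBlk G l) (u : List (σ ⊕ G.V)) :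
    SeqDerives (b.map (rset G)) (hatify G u) (hatify G u) := by
  refine seqDerives_id ?_
  intro c hc X hX
  obtain ⟨l, hl, rfl⟩ := List.mem_map.1 hc
  simp only [hatify, List.mem_map] at hX
  obtain ⟨x, _, hx⟩ := hX
  cases x with
  | inl a => cases hx
  | inr X0 =>
    cases Sum.inr.inj hx
    exact rul_blk_ht_mem G (hb l hl) X0

lemma seq_id_single {b : List (TT G)} (a : σ) :
    SeqDerives (b.map (rset G)) [Sum.inl a] [Sum.inl a] := by
  refine seqDerives_id ?_
  intro c hc X hX
  simp at hX

/-- forward simulation of a whole sub-derivation inside a block -/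
lemma hseq_fwd {p : G.T × G.V} (hts : List (Hg G p).T)
    {s s' : List ((σ ⊕ G.V) ⊕ (Hg G p).V)}
    (h : SeqDerives (hts.map (Hg G p).ruleSet) s s') :
    SeqDerives (((hts.map (bdy G p)).map (rset G))) (s.map (hemb G p))
      (s'.map (hemb G p)) := by
  induction hts generalizing s with
  | nil => rw [show s = s' from h]; rfl
  | cons t ts ihn =>
    obtain ⟨m, hm, h⟩ := h
    exact ⟨m.map (hemb G p), hsim_fwd G hm, ihn h⟩

open Classical in
lemma evalFrom_bdy (p : G.T × G.V) (hts : List (Hg G p).T) (s : Qp G p) (q : QR G) :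
    (ctrlDFA G).evalFrom (bkQ G p s q) (hts.map (bdy G p)) =
      bkQ G p ((RWp G p).M.evalFrom s hts) q := by
  induction hts generalizing s with
  | nil => rfl
  | cons t ts ihn =>
    show (ctrlDFA G).evalFrom ((ctrlDFA G).step (bkQ G p s q) (bdy G p t)) _ = _
    have hstq : (ctrlDFA G).step (bkQ G p s q) (bdy G p t) =
        bkQ G p ((RWp G p).M.step s t) q := by
      have h0 : (ctrlDFA G).step (bkQ G p s q) (bdy G p t) =
          if h : p = p then bkQ G p ((RWp G p).M.step (h ▸ s) t) q else deadQ G := rfl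
      rw [h0, dif_pos rfl]
    rw [hstq, ihn]
    rfl

open Classical in
lemma sgood_act (τ : G.T) (q : QR G) (X : G.V) {st : QQ G} (hst : st ∈ SGood G τ q) :
    (ctrlDFA G).step st (act G (τ, X)) = bkQ G (τ, X) (RWp G (τ, X)).M.start q := by
  rcases hst with rfl | ⟨X', s, hs, rfl⟩
  · have h0 : (ctrlDFA G).step (phQ G q (some τ)) (act G (τ, X)) =
        if some τ = some (τ, X).1 then bkQ G (τ, X) (RWp G (τ, X)).M.start q
        else deadQ G := rfl
    rw [h0, if_pos rfl]
  · have h0 : (ctrlDFA G).step (bkQ G (τ, X') s q) (act G (τ, X)) =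
        if s ∈ (RWp G (τ, X')).M.accept ∧ (τ, X).1 = (τ, X').1 then
          bkQ G (τ, X) (RWp G (τ, X)).M.start q
        else deadQ G := rfl
    rw [h0, if_pos ⟨hs, rfl⟩]

open Classical in
lemma sany_ini (τ : G.T) (q : QR G) {st : QQ G}
    (hst : (∃ o, st = phQ G q o) ∨ ∃ τ₀, st ∈ SGood G τ₀ q) :
    (ctrlDFA G).step st (ini G τ) = phQ G ((RW G).M.step q τ) (some τ) := by
  rcases hst with ⟨o, rfl⟩ | ⟨τ₀, hst⟩
  · rfl
  · rcases hst with rfl | ⟨X', s, hs, rfl⟩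
    · rfl
    · have h0 : (ctrlDFA G).step (bkQ G (τ₀, X') s q) (ini G τ) =
          if s ∈ (RWp G (τ₀, X')).M.accept then phQ G ((RW G).M.step q τ) (some τ)
          else deadQ G := rfl
      rw [h0, if_pos hs]

lemma accept_of_good {q : QR G} (hq : q ∈ (RW G).M.accept) {st : QQ G}
    (hst : (∃ o, st = phQ G q o) ∨ ∃ τ₀, st ∈ SGood G τ₀ q) :
    st ∈ (ctrlDFA G).accept := by
  rcases hst with ⟨o, rfl⟩ | ⟨τ₀, hst⟩
  · exact hq
  · rcases hst with rfl | ⟨X', s, hs, rfl⟩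
    · exact hq
    · exact ⟨hs, hq⟩

/-- Forward simulation of one extended table application, by a sequence of blocks. -/
lemma fwd_block {τ : G.T} {u v : List (σ ⊕ G.V)}
    (hstep : TableStep (G.rules τ) u v) :
    ∃ b : List (TT G),
      (∀ l ∈ b, isBlk G l) ∧
      (∀ q st, st ∈ SGood G τ q → (ctrlDFA G).evalFrom st b ∈ SGood G τ q) ∧
      SeqDerives (b.map (rset G)) (hatify G u) (v.map (emb G)) := by
  induction hstep with
  | nil => exact ⟨[], by simp, fun q st h => h, rfl⟩
  | term a hst ihn =>
    obtain ⟨b, hblk, heval, hder⟩ := ihn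
    refine ⟨b, hblk, heval, ?_⟩
    have := seqDerives_par (seq_id_single G (b := b) a) hder
    exact this
  | @nonterm X m hm u' v' hst ihn =>
    obtain ⟨b, hblk, heval, hder⟩ := ihn
    -- extract a control word for m
    have hm' : m ∈ (Hg G (τ, X)).language := by rw [Hg_lang]; exact hm
    obtain ⟨hts, hcts, hsder⟩ := hm'
    refine ⟨(act G (τ, X) :: hts.map (bdy G (τ, X))) ++ b, ?_, ?_, ?_⟩
    · intro l hl
      rcases List.mem_append.1 hl with hl | hl
      · rcases List.mem_cons.1 hl with rfl | hl
        · trivial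
        · obtain ⟨t, _, rfl⟩ := List.mem_map.1 hl
          trivial
      · exact hblk l hl
    · intro q st hst'
      rw [DFA.evalFrom_of_append]
      refine heval q _ ?_
      show (ctrlDFA G).evalFrom ((ctrlDFA G).step st (act G (τ, X)))
        (hts.map (bdy G (τ, X))) ∈ _
      rw [sgood_act G τ q X hst', evalFrom_bdy]
      refine Or.inr ⟨X, _, ?_, rfl⟩
      have : hts ∈ (RWp G (τ, X)).M.accepts := by rw [(RWp G (τ, X)).acc]; exact hcts
      exact (DFA.mem_accepts _).1 this
    · -- the derivation
      rw [List.map_append]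
      refine seqDerives_append.2 ⟨m.map (emb G) ++ hatify G u', ?_, ?_⟩
      · -- our block acting on (ht X) :: hatify u'
        show SeqDerives _ (Sum.inr (ht G X) :: hatify G u') _
        have hseg : SeqDerives (((act G (τ, X) :: hts.map (bdy G (τ, X)))).map (rset G))
            [Sum.inr (ht G X)] (m.map (emb G)) := by
          refine ⟨[Sum.inr (sb G (τ, X) (Hg G (τ, X)).start)] ++ [], ?_, ?_⟩
          · have hw : [Sum.inr (sb G (τ, X) (Hg G (τ, X)).start)] ∈
                rul G (act G (τ, X)) (ht G X) := by
              rw [show (ht G X : VV G) = ht G (τ, X).2 from rfl, rul_act_ht_eq]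
              simp
            exact TableStep.nonterm (ht G X) hw TableStep.nil
          · show SeqDerives _ [Sum.inr (sb G (τ, X) (Hg G (τ, X)).start)] _
            have := hseq_fwd G hts hsder
            rw [map_hemb_inl] at this
            exact this
        have hrest : SeqDerives (((act G (τ, X) :: hts.map (bdy G (τ, X)))).map (rset G))
            (hatify G u') (hatify G u') := by
          refine seq_id_hatify G ?_ u'
          intro l hl
          rcases List.mem_cons.1 hl with rfl | hl
          · trivial
          · obtain ⟨t, _, rfl⟩ := List.mem_map.1 hl
            trivial
        exact seqDerives_par hseg hrest
      · -- b acting on m.map emb ++ hatify u'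
        have hid : SeqDerives (b.map (rset G)) (m.map (emb G)) (m.map (emb G)) :=
          seq_id_emb G hblk m
        rw [List.map_append]
        exact seqDerives_par hid hder

/-- Top-level forward simulation. -/
lemma fwd_top (w : List σ) :
    ∀ (ts : List G.T) (u : List (σ ⊕ G.V)),
      SeqDerives (ts.map G.rules) u (w.map Sum.inl) →
      ∀ (q : QR G) (st : QQ G),
        ((∃ o, st = phQ G q o) ∨ ∃ τ₀, st ∈ SGood G τ₀ q) →
        ∃ c : List (TT G),
          SeqDerives (c.map (rset G)) (u.map (emb G)) (w.map Sum.inl) ∧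
          ((RW G).M.evalFrom q ts ∈ (RW G).M.accept →
            (ctrlDFA G).evalFrom st c ∈ (ctrlDFA G).accept) := by
  intro ts
  induction ts with
  | nil =>
    intro u hder q st hst
    have hu : u = w.map Sum.inl := hder
    refine ⟨[], ?_, ?_⟩
    · show u.map (emb G) = w.map Sum.inl
      rw [hu, List.map_map]
      rfl
    · intro hq
      exact accept_of_good G hq hst
  | cons τ ts ihn =>
    intro u hder q st hst
    obtain ⟨v, hv, hrest⟩ := hder
    obtain ⟨b, hblk, heval, hbder⟩ := fwd_block G hv
    have hSG : phQ G ((RW G).M.step q τ) (some τ) ∈ SGood G τ ((RW G).M.step q τ) :=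
      Or.inl rfl
    have hSG' := heval ((RW G).M.step q τ) _ hSG
    obtain ⟨c', hc'der, hc'acc⟩ := ihn v hrest ((RW G).M.step q τ)
      ((ctrlDFA G).evalFrom (phQ G ((RW G).M.step q τ) (some τ)) b)
      (Or.inr ⟨τ, hSG'⟩)
    refine ⟨ini G τ :: (b ++ c'), ?_, ?_⟩
    · refine ⟨hatify G u, ini_emb_fwd G τ u, ?_⟩
      rw [List.map_append]
      exact seqDerives_append.2 ⟨v.map (emb G), hbder, hc'der⟩
    · intro hq
      show (ctrlDFA G).evalFrom ((ctrlDFA G).step st (ini G τ)) (b ++ c') ∈ _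
      rw [sany_ini G τ q hst, DFA.evalFrom_of_append]
      exact hc'acc hq

end Fwd
end ExtProof

/-- Extended ET0L grammars generate exactly ET0L languages (Christensen). -/
theorem extET0LGrammar_language_isET0L (σ : Type) [Fintype σ]
    (G : ExtET0LGrammar σ) : IsET0L G.language := by
  refine ⟨ExtProof.GG G, ?_⟩
  ext w
  constructor
  · rintro ⟨c, hc, hder⟩
    have hacc : (ExtProof.ctrlDFA G).evalFrom
        (Sum.inl ((ExtProof.RW G).M.start, none)) c ∈ (ExtProof.ctrlDFA G).accept := hc
    have hI : ExtProof.InvSt G (Sum.inl ((ExtProof.RW G).M.start, none))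
        [Sum.inr G.start] [Sum.inr (ExtProof.pl G G.start)] := rfl
    obtain ⟨ts, hts, hder'⟩ := ExtProof.grand G w c
      (Sum.inl ((ExtProof.RW G).M.start, none)) [Sum.inr G.start]
      [Sum.inr (ExtProof.pl G G.start)] hI hder hacc
    have hmem : ts ∈ (ExtProof.RW G).M.accepts := hts
    rw [(ExtProof.RW G).acc] at hmem
    exact ⟨ts, hmem, hder'⟩
  · rintro ⟨ts, hts, hder⟩
    obtain ⟨c, hcder, hcacc⟩ := ExtProof.fwd_top G w ts [Sum.inr G.start] hder
      (ExtProof.RW G).M.start (Sum.inl ((ExtProof.RW G).M.start, none))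
      (Or.inl ⟨none, rfl⟩)
    refine ⟨c, ?_, hcder⟩
    apply hcacc
    rw [← (ExtProof.RW G).acc] at hts
    exact hts
end

section
/- For every check-stack pushdown (cspd) automaton M there exists a cspd automaton M' with L(M') = L(M) such that: (1) in every run of M' the height of the pushdown never exceeds the height of the check-stack; (2) M' has exactly one accepting state; (3) the pushdown of M' contains only the bottom symbol ♭ whenever M' enters its accepting state; (4) transitions of M' into the accepting state do not modify the pushdown; and (5) every transition of M' into a non-accepting state either pushes exactly one letter onto the pushdown or pops exactly one letter from the pushdown. -/
/-- `M.Reaches u w c`: starting in the initial configuration with input `w` and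
check-stack `♭u`, the machine can reach configuration `c`. -/
def CSPD.Reaches {σ : Type} (M : CSPD σ) (u : List M.Δ) (w : List σ)
    (c : M.Q × List σ × List M.Γ) : Prop :=
  Relation.ReflTransGen (CStep M u) (M.start, w, []) c

namespace NF

/-- encoding of Obs into a fintype -/
def obsEnc {A B : Type} : Obs A B → Bool ⊕ (A × B)
  | .bottom => .inl false
  | .blind => .inl true
  | .pair a b => .inr (a, b)

noncomputable instance {A B : Type} [Fintype A] [Fintype B] : Fintype (Obs A B) :=
  Fintype.ofInjective obsEnc (by
    intro x y h
    cases x <;> cases y <;> simp_all [obsEnc])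

lemma le_foldr_max : ∀ (l : List ℕ), ∀ x ∈ l, x ≤ l.foldr max 0 := by
  intro l
  induction l with
  | nil => simp
  | cons a l ih =>
    intro x hx
    rcases List.mem_cons.mp hx with rfl | hx
    · simp [List.foldr]
    · exact le_trans (ih x hx) (by simp [List.foldr])

variable {σ : Type} [Fintype σ] (M : CSPD σ)

noncomputable instance : Fintype M.Q := M.finQ
noncomputable instance : Fintype M.Γ := M.finΓ
noncomputable instance : Fintype M.Δ := M.finΔ

abbrev Γ' := Option M.Γ
abbrev Δ' := Option M.Δ × Bool

def N : ℕ := (M.trans.map (fun t => t.2.2.length)).foldr max 0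

lemma len_le_N {t} (ht : t ∈ M.trans) : t.2.2.length ≤ N M :=
  le_foldr_max _ _ (List.mem_map_of_mem ht)

abbrev BW := {w : List M.Γ // w.length ≤ N M}

noncomputable instance : Fintype (BW M) := by
  classical
  exact Fintype.ofInjective
    (fun w => (fun i : Fin (N M + 1) => w.val[(i : ℕ)]?))
    (by
      intro a b h
      apply Subtype.ext
      apply List.ext_getElem?
      intro n
      by_cases hn : n < N M + 1
      · exact congrFun h ⟨n, hn⟩
      · rw [List.getElem?_eq_none (le_trans a.2 (by omega)),
            List.getElem?_eq_none (le_trans b.2 (by omega))])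

abbrev Q' := M.Q ⊕ ((M.Q × BW M) ⊕ Bool)

def mk (q : M.Q) (rw : BW M) : Q' M := Sum.inr (Sum.inl (q, rw))
def drain : Q' M := Sum.inr (Sum.inr false)
def qacc : Q' M := Sum.inr (Sum.inr true)

def tailBW (rw : BW M) : BW M := ⟨rw.val.tail, le_trans (by simp [List.length_tail]) rw.2⟩

open Classical in
noncomputable def tgt (q : M.Q) (rw : BW M) : Q' M :=
  if rw.val ≠ [] ∧ rw.val.tail = [] then Sum.inl q else mk M q (tailBW M rw)

def fl (rw : BW M) : Γ' M := rw.val.head?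

def decodeV : Option (Γ' M × Option (Γ' M)) → List (Γ' M)
  | none => []
  | some (x, none) => [x]
  | some (x, some g) => [x, g]

open Classical in
/-- transition relation of the normal-form machine, on encoded candidates -/
inductive Step' : ((Q' M × Option σ × Obs (Δ' M) (Γ' M)) × (Q' M × Option (Γ' M × Option (Γ' M)))) → Prop
  | startBottom {p a q₀ w} (ht : ((p, a, Obs.bottom), (q₀, w)) ∈ M.trans)
      (rw : BW M) (hrw : rw.val = w.reverse) :
      Step' ((Sum.inl p, a, Obs.bottom), (tgt M q₀ rw, some (fl M rw, none)))
  | startBlindB {p a q₀ w} (ht : ((p, a, Obs.blind), (q₀, w)) ∈ M.trans)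
      (rw : BW M) (hrw : rw.val = w.reverse) :
      Step' ((Sum.inl p, a, Obs.bottom), (tgt M q₀ rw, some (fl M rw, none)))
  | startBlindP {p a q₀ w} (ht : ((p, a, Obs.blind), (q₀, w)) ∈ M.trans)
      (rw : BW M) (hrw : rw.val = w.reverse) (d : Option M.Δ) (g' : Γ' M) :
      Step' ((Sum.inl p, a, Obs.pair (d, false) g'), (tgt M q₀ rw, some (fl M rw, some g')))
  | startPair0 {p a q₀ w d g} (ht : ((p, a, Obs.pair d g), (q₀, w)) ∈ M.trans)
      (hw : w = []) (b : Bool) :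
      Step' ((Sum.inl p, a, Obs.pair (some d, b) (some g)), (Sum.inl q₀, none))
  | startPair1 {p a q₀ w d g} (ht : ((p, a, Obs.pair d g), (q₀, w)) ∈ M.trans)
      (rw : BW M) (hrw : rw.val = w.reverse) (hne : rw.val ≠ []) (b : Bool) :
      Step' ((Sum.inl p, a, Obs.pair (some d, b) (some g)), (mk M q₀ rw, none))
  | midB {q₀} (rw : BW M) (hne : rw.val ≠ []) :
      Step' ((mk M q₀ rw, none, Obs.bottom), (tgt M q₀ rw, some (fl M rw, none)))
  | midP {q₀} (rw : BW M) (hne : rw.val ≠ []) (d : Option M.Δ) (g' : Γ' M) :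
      Step' ((mk M q₀ rw, none, Obs.pair (d, false) g'), (tgt M q₀ rw, some (fl M rw, some g')))
  | midPop {q₀} (rw : BW M) (he : rw.val = []) (d : Δ' M) :
      Step' ((mk M q₀ rw, none, Obs.pair d none), (Sum.inl q₀, none))
  | accEnter {f} (hf : f ∈ M.accept) :
      Step' ((Sum.inl f, none, Obs.bottom), (qacc M, none))
  | accPop {f} (hf : f ∈ M.accept) (d : Δ' M) (g' : Γ' M) :
      Step' ((Sum.inl f, none, Obs.pair d g'), (drain M, none))
  | drainPop (d : Δ' M) (g' : Γ' M) :
      Step' ((drain M, none, Obs.pair d g'), (drain M, none))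
  | drainAcc : Step' ((drain M, none, Obs.bottom), (qacc M, none))

open Classical in
noncomputable def trans' : List ((Q' M × Option σ × Obs (Δ' M) (Γ' M)) × (Q' M × List (Γ' M))) :=
  ((Finset.univ.filter (Step' M)).toList).map (fun c => (c.1, (c.2.1, decodeV M c.2.2)))

lemma mem_trans' {x} :
    x ∈ trans' M ↔ ∃ vv, Step' M (x.1, (x.2.1, vv)) ∧ decodeV M vv = x.2.2 := by
  classical
  simp only [trans', List.mem_map, Finset.mem_toList, Finset.mem_filter, Finset.mem_univ,
    true_and]
  constructor
  · rintro ⟨c, hs, rfl⟩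
    exact ⟨c.2.2, hs, rfl⟩
  · rintro ⟨vv, hs, hd⟩
    exact ⟨(x.1, (x.2.1, vv)), hs, by simp only [hd]⟩


def pad : Δ' M := (none, false)
def mark : Δ' M := (none, true)
def emb (d : M.Δ) : Δ' M := (some d, false)

/-- the check stack for simulating a run over `u` with headroom `L ≥ u.length + 1` -/
def shape (u : List M.Δ) (L : ℕ) : List (Δ' M) :=
  u.map (emb M) ++ List.replicate (L - 1 - u.length) (pad M) ++ [mark M]

variable {S : Type} (D : DFA M.Δ S)

open Classical in
/-- DFA for the new check-stack language -/
noncomputable def D' : DFA (Δ' M) (Option (S ⊕ Bool)) where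
  step := fun st a =>
    match st, a with
    | some (Sum.inl s), (some d, false) => some (Sum.inl (D.step s d))
    | some (Sum.inl s), (none, b) => if s ∈ D.accept then some (Sum.inr b) else none
    | some (Sum.inr false), (none, b) => some (Sum.inr b)
    | _, _ => none
  start := some (Sum.inl D.start)
  accept := {some (Sum.inr true)}

lemma D'_eval_none (w : List (Δ' M)) : (D' M D).evalFrom none w = none := by
  induction w with
  | nil => rfl
  | cons a w ih => simpa [DFA.evalFrom, D'] using ih

lemma D'_eval_done (w : List (Δ' M)) :
    (D' M D).evalFrom (some (Sum.inr true)) w = some (Sum.inr true) ↔ w = [] := by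
  cases w with
  | nil => simp
  | cons a w =>
    simp only [DFA.evalFrom, List.foldl_cons]
    have hstep : (D' M D).step (some (Sum.inr true)) a = none := by
      rcases a with ⟨d | _, b⟩ <;> rfl
    rw [hstep]
    show (D' M D).evalFrom none w = _ ↔ _
    rw [D'_eval_none]
    simp

lemma D'_eval_pad (w : List (Δ' M)) :
    (D' M D).evalFrom (some (Sum.inr false)) w = some (Sum.inr true) ↔
      ∃ k, w = List.replicate k (pad M) ++ [mark M] := by
  induction w with
  | nil =>
    constructor
    · intro h; simp [DFA.evalFrom] at h
    · rintro ⟨k, hk⟩; exact absurd hk (by simp)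
  | cons a w ih =>
    simp only [DFA.evalFrom, List.foldl_cons]
    rcases a with ⟨_ | d, b⟩
    · cases b with
      | false =>
        have hstep : (D' M D).step (some (Sum.inr false)) (none, false) = some (Sum.inr false) := rfl
        rw [hstep]
        rw [show List.foldl (D' M D).step (some (Sum.inr false)) w = (D' M D).evalFrom (some (Sum.inr false)) w from rfl, ih]
        constructor
        · rintro ⟨k, rfl⟩; exact ⟨k+1, by simp [List.replicate, pad]⟩
        · rintro ⟨k, hk⟩
          cases k with
          | zero => simp [pad, mark] at hk
          | succ k =>
            refine ⟨k, ?_⟩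
            simpa [List.replicate, pad] using hk
      | true =>
        have hstep : (D' M D).step (some (Sum.inr false)) (none, true) = some (Sum.inr true) := rfl
        rw [hstep]
        rw [show List.foldl (D' M D).step (some (Sum.inr true)) w = (D' M D).evalFrom (some (Sum.inr true)) w from rfl, D'_eval_done]
        constructor
        · rintro rfl; exact ⟨0, by simp [mark]⟩
        · rintro ⟨k, hk⟩
          cases k with
          | zero => simpa [mark, pad] using congrArg List.tail hk
          | succ k =>
            exfalso
            have := congrArg List.head? hk
            simp [List.replicate, pad, mark] at this
    · have hstep : (D' M D).step (some (Sum.inr false)) (some d, b) = none := rfl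
      rw [hstep]
      rw [show List.foldl (D' M D).step (none : Option (S ⊕ Bool)) w = (D' M D).evalFrom none w from rfl, D'_eval_none]
      constructor
      · intro h; exact absurd h (by simp)
      · rintro ⟨k, hk⟩
        cases k with
        | zero => simp [mark, pad, emb] at hk
        | succ k => simp [List.replicate, pad, emb] at hk

lemma D'_eval_main (w : List (Δ' M)) : ∀ (s : S),
    (D' M D).evalFrom (some (Sum.inl s)) w = some (Sum.inr true) ↔
      ∃ u k, w = u.map (emb M) ++ List.replicate k (pad M) ++ [mark M] ∧
        D.evalFrom s u ∈ D.accept := by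
  induction w with
  | nil =>
    intro s
    constructor
    · intro h; simp [DFA.evalFrom] at h
    · rintro ⟨u, k, hk, -⟩; exact absurd hk (by simp)
  | cons a w ih =>
    intro s
    simp only [DFA.evalFrom, List.foldl_cons]
    rcases a with ⟨_ | d, b⟩
    · -- (none, b)
      by_cases hs : s ∈ D.accept
      · have hstep : (D' M D).step (some (Sum.inl s)) (none, b) = some (Sum.inr b) := by
          simp [D', hs]
        rw [hstep]
        cases b with
        | false =>
          rw [show List.foldl (D' M D).step (some (Sum.inr false)) w
              = (D' M D).evalFrom (some (Sum.inr false)) w from rfl, D'_eval_pad]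
          constructor
          · rintro ⟨k, rfl⟩
            exact ⟨[], k+1, by simp [List.replicate, pad], by simpa [DFA.evalFrom] using hs⟩
          · rintro ⟨u, k, hk, hu⟩
            cases u with
            | nil =>
              cases k with
              | zero => simp [pad, mark] at hk
              | succ k => exact ⟨k, by simpa [List.replicate, pad] using hk⟩
            | cons x u => simp [emb, pad] at hk
        | true =>
          rw [show List.foldl (D' M D).step (some (Sum.inr true)) w
              = (D' M D).evalFrom (some (Sum.inr true)) w from rfl, D'_eval_done]
          constructor
          · rintro rfl
            exact ⟨[], 0, by simp [mark], by simpa [DFA.evalFrom] using hs⟩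
          · rintro ⟨u, k, hk, hu⟩
            cases u with
            | nil =>
              cases k with
              | zero => simpa [mark, pad] using congrArg List.tail hk
              | succ k => simpa [List.replicate, pad, mark] using congrArg List.head? hk
            | cons x u => simp [emb, pad, mark] at hk
      · have hstep : (D' M D).step (some (Sum.inl s)) (none, b) = none := by
          simp [D', hs]
        rw [hstep]
        rw [show List.foldl (D' M D).step (none : Option (S ⊕ Bool)) w
            = (D' M D).evalFrom none w from rfl, D'_eval_none]
        constructor
        · intro h; exact absurd h (by simp)
        · rintro ⟨u, k, hk, hu⟩
          exfalso
          cases u with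
          | nil =>
            apply hs
            simpa [DFA.evalFrom] using hu
          | cons x u => simp [emb, pad, mark] at hk
    · -- (some d, b)
      cases b with
      | false =>
        have hstep : (D' M D).step (some (Sum.inl s)) (some d, false)
            = some (Sum.inl (D.step s d)) := rfl
        rw [hstep]
        rw [show List.foldl (D' M D).step (some (Sum.inl (D.step s d))) w
            = (D' M D).evalFrom (some (Sum.inl (D.step s d))) w from rfl, ih]
        constructor
        · rintro ⟨u, k, rfl, hu⟩
          exact ⟨d :: u, k, by simp [emb], by simpa [DFA.evalFrom] using hu⟩
        · rintro ⟨u, k, hk, hu⟩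
          cases u with
          | nil =>
            exfalso
            cases k with
            | zero => simp [mark, emb] at hk
            | succ k => simp [List.replicate, pad, emb] at hk
          | cons x u =>
            have h1 : d = x ∧
                w = u.map (emb M) ++ (List.replicate k (pad M) ++ [mark M]) := by
              simpa [emb] using hk
            obtain ⟨rfl, hw⟩ := h1
            rw [← List.append_assoc] at hw
            exact ⟨u, k, hw, by simpa [DFA.evalFrom] using hu⟩
      | true =>
        have hstep : (D' M D).step (some (Sum.inl s)) (some d, true) = none := rfl
        rw [hstep]
        rw [show List.foldl (D' M D).step (none : Option (S ⊕ Bool)) w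
            = (D' M D).evalFrom none w from rfl, D'_eval_none]
        constructor
        · intro h; exact absurd h (by simp)
        · rintro ⟨u, k, hk, hu⟩
          cases u with
          | nil =>
            cases k with
            | zero => simp [mark, emb] at hk
            | succ k => simp [List.replicate, pad, emb] at hk
          | cons x u => simp [emb] at hk

lemma mem_accepts_D' {w : List (Δ' M)} :
    w ∈ (D' M D).accepts ↔
      ∃ u k, w = u.map (emb M) ++ List.replicate k (pad M) ++ [mark M] ∧ u ∈ D.accepts := by
  rw [DFA.mem_accepts]
  show (D' M D).evalFrom (some (Sum.inl D.start)) w ∈ ({some (Sum.inr true)} : Set _) ↔ _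
  rw [Set.mem_singleton_iff, D'_eval_main]
  constructor
  · rintro ⟨u, k, hk, hu⟩; exact ⟨u, k, hk, by rwa [DFA.mem_accepts]⟩
  · rintro ⟨u, k, hk, hu⟩; exact ⟨u, k, hk, by rwa [DFA.mem_accepts] at hu⟩

lemma shape_mem_accepts {u : List M.Δ} (hu : u ∈ D.accepts) {L : ℕ} (hL : u.length + 1 ≤ L) :
    shape M u L ∈ (D' M D).accepts := by
  rw [mem_accepts_D']
  exact ⟨u, L - 1 - u.length, rfl, hu⟩

lemma shape_length {u : List M.Δ} {L : ℕ} (hL : u.length + 1 ≤ L) :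
    (shape M u L).length = L := by
  simp [shape]
  omega
/-! ### decomposition lookups -/

def W (u : List M.Δ) (k : ℕ) : List (Δ' M) :=
  u.map (emb M) ++ List.replicate k (pad M) ++ [mark M]

lemma W_length (u : List M.Δ) (k : ℕ) : (W M u k).length = u.length + k + 1 := by
  simp [W]; omega

lemma W_get_lt {u : List M.Δ} {k i : ℕ} (h : i < u.length) :
    (W M u k)[i]? = some (emb M u[i]) := by
  rw [W, List.getElem?_append, if_pos (by simp; omega), List.getElem?_append,
    if_pos (by simpa using h), List.getElem?_map, List.getElem?_eq_getElem h]
  rfl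

lemma W_get_pad {u : List M.Δ} {k i : ℕ} (h1 : u.length ≤ i) (h2 : i < u.length + k) :
    (W M u k)[i]? = some (pad M) := by
  rw [W, List.getElem?_append, if_pos (by simp; omega), List.getElem?_append,
    if_neg (by simpa using h1), List.getElem?_replicate, if_pos (by simp; omega)]

lemma W_get_mark {u : List M.Δ} {k : ℕ} :
    (W M u k)[u.length + k]? = some (mark M) := by
  rw [W, List.getElem?_append, if_neg (by simp)]
  simp

lemma W_get_false {u : List M.Δ} {k i : ℕ} {y : Option M.Δ}
    (h : (W M u k)[i]? = some (y, false)) : i + 1 < (W M u k).length := by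
  have hlen : i < (W M u k).length := (List.getElem?_eq_some_iff.mp h).1
  rw [W_length] at hlen ⊢
  rcases Nat.lt_or_ge i (u.length + k) with h1 | h1
  · omega
  · have : i = u.length + k := by omega
    subst this
    rw [W_get_mark] at h
    simp [mark] at h

lemma W_get_some {u : List M.Δ} {k i : ℕ} {d : M.Δ} {b : Bool}
    (h : (W M u k)[i]? = some (some d, b)) : u[i]? = some d := by
  have hlen : i < (W M u k).length := (List.getElem?_eq_some_iff.mp h).1
  rw [W_length] at hlen
  rcases Nat.lt_or_ge i u.length with h1 | h1
  · rw [W_get_lt M h1] at h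
    rw [List.getElem?_eq_getElem h1]
    simp [emb] at h
    simp [h]
  · exfalso
    rcases Nat.lt_or_ge i (u.length + k) with h2 | h2
    · rw [W_get_pad M h1 h2] at h; simp [pad] at h
    · have : i = u.length + k := by omega
      subst this
      rw [W_get_mark] at h; simp [mark] at h

lemma shape_eq_W (u : List M.Δ) (L : ℕ) : shape M u L = W M u (L - 1 - u.length) := rfl

lemma shape_get_of_lt {u : List M.Δ} {L i : ℕ} (hL : u.length + 1 ≤ L) (h : i + 1 < L) :
    ∃ y, (shape M u L)[i]? = some (y, false) := by
  rw [shape_eq_W]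
  rcases Nat.lt_or_ge i u.length with h1 | h1
  · exact ⟨some u[i], W_get_lt M h1⟩
  · exact ⟨none, W_get_pad M h1 (by omega)⟩

lemma shape_get_of_mem {u : List M.Δ} {L i : ℕ} {d : M.Δ} (hL : u.length + 1 ≤ L)
    (h : u[i]? = some d) : (shape M u L)[i]? = some (some d, false) := by
  obtain ⟨h1, h2⟩ := List.getElem?_eq_some_iff.mp h
  rw [shape_eq_W]
  rw [W_get_lt M h1]
  simp [emb, h2]

/-! ### the normal-form machine -/

noncomputable abbrev NFM [Fintype S] : CSPD σ where
  Q := Q' M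
  finQ := inferInstance
  Γ := Γ' M
  finΓ := inferInstance
  Δ := Δ' M
  finΔ := inferInstance
  checkLang := (D' M D).accepts
  check_regular := ⟨Option (S ⊕ Bool), inferInstance, D' M D, rfl⟩
  trans := trans' M
  start := Sum.inl M.start
  accept := {qacc M}

variable [Fintype S]

lemma tgt_ne_qacc (q : M.Q) (rw : BW M) : tgt M q rw ≠ qacc M := by
  unfold tgt
  split <;> simp [mk, qacc]

lemma tgt_ne_drain (q : M.Q) (rw : BW M) : tgt M q rw ≠ drain M := by
  unfold tgt
  split <;> simp [mk, drain]

/-- target analysis : transitions into qacc -/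
lemma step'_to_qacc {p a o vv} (h : Step' M ((p, a, o), (qacc M, vv))) :
    o = Obs.bottom ∧ vv = none := by
  generalize hq : (qacc M : Q' M) = qq at h
  cases h with
  | startBottom ht rw hrw => exact absurd hq.symm (tgt_ne_qacc M _ _)
  | startBlindB ht rw hrw => exact absurd hq.symm (tgt_ne_qacc M _ _)
  | startBlindP ht rw hrw d g' => exact absurd hq.symm (tgt_ne_qacc M _ _)
  | startPair0 ht hw b => exact absurd hq (by simp [qacc])
  | startPair1 ht rw hrw hne b => exact absurd hq (by simp [mk, qacc])
  | midB rw hne => exact absurd hq.symm (tgt_ne_qacc M _ _)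
  | midP rw hne d g' => exact absurd hq.symm (tgt_ne_qacc M _ _)
  | midPop rw he d => exact absurd hq (by simp [qacc])
  | accEnter hf => exact ⟨rfl, rfl⟩
  | accPop hf d g' => exact absurd hq (by simp [drain, qacc])
  | drainPop d g' => exact absurd hq (by simp [drain, qacc])
  | drainAcc => exact ⟨rfl, rfl⟩

/-- shape analysis for bottom-observation transitions -/
lemma step'_bottom_shape {p a q vv} (h : Step' M ((p, a, Obs.bottom), (q, vv))) :
    vv = none ∨ ∃ y, vv = some (y, none) := by
  generalize ho : (Obs.bottom : Obs (Δ' M) (Γ' M)) = o at h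
  cases h <;> first
    | exact Or.inl rfl
    | exact Or.inr ⟨_, rfl⟩
    | (exfalso; simp at ho)

/-- shape analysis for pair-observation transitions -/
lemma step'_pair_shape {p a dd gg q vv} (h : Step' M ((p, a, Obs.pair dd gg), (q, vv))) :
    vv = none ∨ ∃ y, vv = some (y, some gg) ∧ dd.2 = false := by
  generalize ho : (Obs.pair dd gg : Obs (Δ' M) (Γ' M)) = o at h
  cases h with
  | startBlindP ht rw hrw d g' =>
    obtain ⟨h1, h2⟩ := by simpa [Obs.pair.injEq] using ho
    exact Or.inr ⟨_, by rw [h2], by rw [h1]⟩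
  | midP rw hne d g' =>
    obtain ⟨h1, h2⟩ := by simpa [Obs.pair.injEq] using ho
    exact Or.inr ⟨_, by rw [h2], by rw [h1]⟩
  | _ => first
    | exact Or.inl rfl
    | (exfalso; simp at ho)

lemma step'_no_blind {p a q vv} (h : Step' M ((p, a, Obs.blind), (q, vv))) : False := by
  generalize ho : (Obs.blind : Obs (Δ' M) (Γ' M)) = o at h
  cases h <;> simp at ho
lemma step'_bottom_shape2 {p a q vv} (h : Step' M ((p, a, Obs.bottom), (q, vv)))
    (hq : q ≠ qacc M) : ∃ y, vv = some (y, none) := by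
  generalize ho : (Obs.bottom : Obs (Δ' M) (Γ' M)) = o at h
  cases h <;> first
    | exact ⟨_, rfl⟩
    | (exact absurd rfl hq)
    | (exfalso; simp at ho)

lemma NFM_trans : (NFM M D).trans = trans' M := rfl
lemma NFM_accept : (NFM M D).accept = {qacc M} := rfl
lemma NFM_check : (NFM M D).checkLang = (D' M D).accepts := rfl

/-- condition (1): pushdown height never exceeds check-stack height -/
lemma cond1 {u : List (Δ' M)} (hu : u ∈ (NFM M D).checkLang) {w : List σ}
    {c : (NFM M D).Q × List σ × List (NFM M D).Γ} (h : (NFM M D).Reaches u w c) :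
    c.2.2.length ≤ u.length := by
  rw [NFM_check, mem_accepts_D'] at hu
  obtain ⟨u₀, k, hu, -⟩ := hu
  rw [show u₀.map (emb M) ++ List.replicate k (pad M) ++ [mark M] = W M u₀ k from rfl] at hu
  subst hu
  induction h with
  | refl => simp
  | tail hs hstep ih =>
    clear hs ih
    cases hstep with
    | bottom ht hr =>
      rename_i p1 q1 a1 w1 inp1 inp1'
      obtain ⟨vv, hS, hv⟩ := (mem_trans' M).mp ht
      simp only at hv
      have hlen : (decodeV M vv).length ≤ 1 := by
        rcases step'_bottom_shape M hS with rfl | ⟨y, rfl⟩ <;> simp [decodeV]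
      rw [hv] at hlen
      simp only
      rw [W_length]
      omega
    | pop ht hd hr =>
      rename_i p1 q1 a1 d1 g1 w1 pd1 inp1 inp1'
      obtain ⟨vv, hS, hv⟩ := (mem_trans' M).mp ht
      simp only at hv
      have hlt := (List.getElem?_eq_some_iff.mp hd).1
      simp only
      rcases step'_pair_shape M hS with rfl | ⟨y, hvv, hfalse⟩
      · simp only [decodeV] at hv
        rw [← hv]
        simp
        omega
      · subst hvv
        simp only [decodeV] at hv
        have h2 : (W M u₀ k)[pd1.length]? = some (d1.1, false) := by
          refine hd.trans ?_
          rw [← hfalse]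
        have h3 := W_get_false M h2
        rw [← hv]
        simp at h3 ⊢
        omega
    | blind ht hr =>
      obtain ⟨vv, hS, hv⟩ := (mem_trans' M).mp ht
      exact absurd hS (step'_no_blind M)

/-- condition (3): empty pushdown at the accepting state -/
lemma cond3 {u : List (Δ' M)} {w : List σ}
    {c : (NFM M D).Q × List σ × List (NFM M D).Γ} (h : (NFM M D).Reaches u w c)
    (hacc : c.1 = qacc M) : c.2.2 = [] := by
  induction h with
  | refl => simp [NFM, qacc] at hacc
  | tail hs hstep ih =>
    clear hs ih
    cases hstep with
    | bottom ht hr =>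
      obtain ⟨vv, hS, hv⟩ := (mem_trans' M).mp ht
      simp only at hacc
      subst hacc
      obtain ⟨-, rfl⟩ := step'_to_qacc M hS
      simp [decodeV] at hv
      exact hv
    | pop ht hd hr =>
      obtain ⟨vv, hS, hv⟩ := (mem_trans' M).mp ht
      simp only at hacc
      subst hacc
      obtain ⟨h1, -⟩ := step'_to_qacc M hS
      exact absurd h1 (by simp)
    | blind ht hr =>
      obtain ⟨vv, hS, hv⟩ := (mem_trans' M).mp ht
      exact absurd hS (step'_no_blind M)

/-- condition (4) -/
lemma cond4 (p : Q' M) (a : Option σ) (o : Obs (Δ' M) (Γ' M)) (q : Q' M) (v : List (Γ' M))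
    (ht : ((p, a, o), (q, v)) ∈ (NFM M D).trans) (hq : q ∈ (NFM M D).accept) :
    (o = Obs.bottom → v = []) ∧
    (∀ d g, o = Obs.pair d g → v = [g]) ∧
    (o = Obs.blind → v = []) := by
  obtain ⟨vv, hS, hv⟩ := (mem_trans' M).mp ht
  rw [NFM_accept, Set.mem_singleton_iff] at hq
  subst hq
  obtain ⟨rfl, rfl⟩ := step'_to_qacc M hS
  refine ⟨fun _ => hv.symm, fun d g hdg => absurd hdg (by simp), fun hb => absurd hb (by simp)⟩

/-- condition (5) -/
lemma cond5 (p : Q' M) (a : Option σ) (o : Obs (Δ' M) (Γ' M)) (q : Q' M) (v : List (Γ' M))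
    (ht : ((p, a, o), (q, v)) ∈ (NFM M D).trans) (hq : q ∉ (NFM M D).accept) :
    (o = Obs.bottom → v.length = 1) ∧
    (∀ d g, o = Obs.pair d g → (v = [] ∨ ∃ x, v = [x, g])) ∧
    (o = Obs.blind → v.length = 1) := by
  obtain ⟨vv, hS, hv⟩ := (mem_trans' M).mp ht
  rw [NFM_accept, Set.mem_singleton_iff] at hq
  refine ⟨?_, ?_, ?_⟩
  · rintro rfl
    obtain ⟨y, rfl⟩ := step'_bottom_shape2 M hS hq
    simp [decodeV] at hv
    rw [← hv]
    rfl
  · rintro d g rfl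
    rcases step'_pair_shape M hS with rfl | ⟨y, rfl, -⟩
    · exact Or.inl hv.symm
    · exact Or.inr ⟨y, hv.symm⟩
  · rintro rfl
    exact absurd hS (step'_no_blind M)
/-! ### forward simulation -/

lemma shape_get_exists {u : List M.Δ} {L i : ℕ} (hL : u.length + 1 ≤ L) (h : i < L) :
    ∃ y, (shape M u L)[i]? = some y := by
  have : i < (shape M u L).length := by rw [shape_length M hL]; exact h
  exact ⟨_, List.getElem?_eq_getElem this⟩

lemma mkStep {u : List M.Δ} {L : ℕ} (hL : u.length + 1 ≤ L) (q : M.Q) (rw : BW M)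
    (hne : rw.val ≠ []) (inp : List σ) (pd' : List (Γ' M)) (hlen : pd'.length < L) :
    CStep (NFM M D) (shape M u L) (mk M q rw, inp, pd') (tgt M q rw, inp, fl M rw :: pd') := by
  cases pd' with
  | nil =>
    exact CStep.bottom
      ((mem_trans' M).mpr ⟨some (fl M rw, none), Step'.midB rw hne, rfl⟩) rfl
  | cons g' pdt =>
    obtain ⟨y, hy⟩ := shape_get_of_lt M hL (i := pdt.length) (by simp at hlen; omega)
    exact CStep.pop (M := NFM M D) (u := shape M u L) (a := none) (d := (y, false)) (g := g') (w := [fl M rw, g'])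
      (pd := pdt) (inp := inp) (inp' := inp)
      ((mem_trans' M).mpr ⟨some (fl M rw, some g'), Step'.midP rw hne y g', rfl⟩) hy rfl

lemma tgt_of_single (q : M.Q) (rw : BW M) (hrw : rw.val.tail = []) (hne : rw.val ≠ []) :
    tgt M q rw = Sum.inl q := by
  unfold tgt
  rw [if_pos ⟨hne, hrw⟩]

lemma tgt_of_cons (q : M.Q) (rw : BW M) (hne : rw.val.tail ≠ []) :
    tgt M q rw = mk M q (tailBW M rw) := by
  unfold tgt
  rw [if_neg (by tauto)]

lemma tgt_of_nil (q : M.Q) (rw : BW M) (hrw : rw.val = []) : tgt M q rw = mk M q rw := by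
  have h1 : tailBW M rw = rw := Subtype.ext (by show rw.val.tail = rw.val; rw [hrw]; rfl)
  unfold tgt
  rw [if_neg (by tauto), h1]

lemma pushA {u : List M.Δ} {L : ℕ} (hL : u.length + 1 ≤ L) :
    ∀ (rwl : List M.Γ) (h : rwl.length ≤ N M), rwl ≠ [] →
    ∀ (q : M.Q) (inp : List σ) (pd' : List (Γ' M)), pd'.length + rwl.length + 1 ≤ L →
    Relation.ReflTransGen (CStep (NFM M D) (shape M u L))
      (mk M q ⟨rwl, h⟩, inp, pd') (Sum.inl q, inp, (rwl.reverse.map some) ++ pd') := by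
  intro rwl
  induction rwl with
  | nil => intro h hne; exact absurd rfl hne
  | cons x rest ih =>
    intro h hne q inp pd' hlen
    have hstep := mkStep M D hL q ⟨x::rest, h⟩ (by simp) inp pd' (by omega)
    by_cases hrest : rest = []
    · subst hrest
      rw [tgt_of_single M q _ (by simp) (by simp)] at hstep
      exact Relation.ReflTransGen.single hstep
    · have h2 : rest.length ≤ N M := le_trans (by simp) h
      rw [tgt_of_cons M q _ (by simpa using hrest),
        show tailBW M ⟨x::rest, h⟩ = ⟨rest, h2⟩ from Subtype.ext rfl] at hstep
      refine Relation.ReflTransGen.head hstep ?_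
      have := ih h2 hrest q inp (some x :: pd') (by simp at hlen ⊢; omega)
      have heq : (rest.reverse.map some) ++ (some x :: pd')
          = ((x :: rest).reverse.map some) ++ pd' := by
        simp
      rw [heq] at this
      exact this

lemma afterTgt {u : List M.Δ} {L : ℕ} (hL : u.length + 1 ≤ L)
    (rwl : List M.Γ) (h : rwl.length ≤ N M) (q : M.Q) (inp : List σ)
    (pd' : List (Γ' M)) (hlen : pd'.length + rwl.length + 2 ≤ L) :
    Relation.ReflTransGen (CStep (NFM M D) (shape M u L))
      (tgt M q ⟨rwl, h⟩, inp, fl M ⟨rwl, h⟩ :: pd')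
      (Sum.inl q, inp, (rwl.reverse.map some) ++ pd') := by
  cases rwl with
  | nil =>
    rw [tgt_of_nil M q _ rfl]
    obtain ⟨y, hy⟩ := shape_get_exists M hL (i := pd'.length) (by omega)
    refine Relation.ReflTransGen.single ?_
    exact CStep.pop (M := NFM M D) (u := shape M u L) (a := none) (d := y) (g := none) (w := []) (pd := pd')
      (inp := inp) (inp' := inp)
      ((mem_trans' M).mpr ⟨none, Step'.midPop ⟨[], h⟩ rfl y, rfl⟩) hy rfl
  | cons x rest =>
    by_cases hrest : rest = []
    · subst hrest
      rw [tgt_of_single M q _ (by simp) (by simp)]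
      exact Relation.ReflTransGen.refl
    · have h2 : rest.length ≤ N M := le_trans (by simp) h
      rw [tgt_of_cons M q _ (by simpa using hrest),
        show tailBW M ⟨x::rest, h⟩ = ⟨rest, h2⟩ from Subtype.ext rfl]
      have := pushA M D hL rest h2 hrest q inp (some x :: pd') (by simp at hlen ⊢; omega)
      have heq : (rest.reverse.map some) ++ (some x :: pd')
          = ((x :: rest).reverse.map some) ++ pd' := by
        simp
      rw [heq] at this
      exact this

/-- simulation of a single step of `M` -/
lemma simStep {u : List M.Δ} {L : ℕ} (hL : u.length + 1 ≤ L)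
    {p q : M.Q} {inp inp' : List σ} {pd pd₂ : List M.Γ}
    (hstep : CStep M u (p, inp, pd) (q, inp', pd₂))
    (hlen : pd.length + pd₂.length + N M + 3 ≤ L) :
    Relation.ReflTransGen (CStep (NFM M D) (shape M u L))
      (Sum.inl p, inp, pd.map some) (Sum.inl q, inp', pd₂.map some) := by
  cases hstep with
  | bottom ht hr =>
    rename_i a
    have hwn : pd₂.reverse.length ≤ N M := by simpa using len_le_N M ht
    refine Relation.ReflTransGen.head
      (CStep.bottom ((mem_trans' M).mpr
        ⟨some (fl M ⟨pd₂.reverse, hwn⟩, none), Step'.startBottom ht ⟨pd₂.reverse, hwn⟩ rfl, rfl⟩) hr)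
      ?_
    have := afterTgt M D hL pd₂.reverse hwn q inp' [] (by simp at hlen ⊢; omega)
    rw [List.reverse_reverse, List.append_nil] at this; exact this
  | pop ht hd hr =>
    rename_i a d g w pdt
    have hwn : w.reverse.length ≤ N M := by simpa using len_le_N M ht
    have hd' := shape_get_of_mem M (L := L) hL hd
    by_cases hw : w = []
    · subst hw
      refine Relation.ReflTransGen.single ?_
      have := CStep.pop (M := NFM M D) (u := shape M u L) (a := a)
        (d := (some d, false)) (g := some g) (w := ([] : List (Γ' M)))
        (pd := pdt.map some) (inp := inp) (inp' := inp')
        ((mem_trans' M).mpr ⟨none, Step'.startPair0 ht rfl false, rfl⟩)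
        (by simpa using hd') hr
      simpa using this
    · refine Relation.ReflTransGen.head
        (CStep.pop (M := NFM M D) (u := shape M u L) (a := a) (d := (some d, false))
          (g := some g) (w := ([] : List (Γ' M)))
          (pd := pdt.map some) (inp := inp) (inp' := inp')
          ((mem_trans' M).mpr
            ⟨none, Step'.startPair1 ht ⟨w.reverse, hwn⟩ rfl (by simpa using hw) false, rfl⟩)
          (by simpa using hd') hr)
        ?_
      have := pushA M D hL w.reverse hwn (by simpa using hw) q inp' (pdt.map some)
        (by simp at hlen ⊢; omega)
      simp only [List.reverse_reverse, ← List.map_append] at this; exact this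
  | blind ht hr =>
    rename_i a w
    have hwn : w.reverse.length ≤ N M := by simpa using len_le_N M ht
    cases pd with
    | nil =>
      refine Relation.ReflTransGen.head
        (CStep.bottom ((mem_trans' M).mpr
          ⟨some (fl M ⟨w.reverse, hwn⟩, none), Step'.startBlindB ht ⟨w.reverse, hwn⟩ rfl, rfl⟩) hr)
        ?_
      have := afterTgt M D hL w.reverse hwn q inp' [] (by simp at hlen ⊢; omega)
      have e : List.map some (w ++ []) = List.map (some : M.Γ → Option M.Γ) w := by simp
      rw [List.reverse_reverse, List.append_nil, ← e] at this; exact this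
    | cons g pdt =>
      obtain ⟨y, hy⟩ := shape_get_of_lt M hL (i := pdt.length) (by simp at hlen; omega)
      refine Relation.ReflTransGen.head
        (CStep.pop (M := NFM M D) (u := shape M u L) (a := a) (d := (y, false)) (g := some g)
          (w := [fl M ⟨w.reverse, hwn⟩, some g]) (pd := pdt.map some)
          (inp := inp) (inp' := inp')
          ((mem_trans' M).mpr
            ⟨some (fl M ⟨w.reverse, hwn⟩, some (some g)),
              Step'.startBlindP ht ⟨w.reverse, hwn⟩ rfl y (some g), rfl⟩)
          (by simpa using hy) hr)
        ?_
      have := afterTgt M D hL w.reverse hwn q inp' ((g :: pdt).map some)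
        (by simp at hlen ⊢; omega)
      rw [List.reverse_reverse, ← List.map_append] at this; exact this

/-- simulation of a full run of `M` -/
lemma simRun {u : List M.Δ} {a b : M.Q × List σ × List M.Γ}
    (h : Relation.ReflTransGen (CStep M u) a b) :
    ∃ L₀, ∀ L, L₀ ≤ L → u.length + 1 ≤ L →
      Relation.ReflTransGen (CStep (NFM M D) (shape M u L))
        (Sum.inl a.1, a.2.1, a.2.2.map some) (Sum.inl b.1, b.2.1, b.2.2.map some) := by
  induction h with
  | refl => exact ⟨0, fun L _ _ => Relation.ReflTransGen.refl⟩
  | tail hs hstep ih =>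
    obtain ⟨L₀, ihL⟩ := ih
    rename_i b c
    refine ⟨max L₀ (b.2.2.length + c.2.2.length + N M + 3), fun L hL1 hL2 => ?_⟩
    refine Relation.ReflTransGen.trans (ihL L (le_trans (le_max_left _ _) hL1) hL2) ?_
    obtain ⟨q1, inp1, pd1⟩ := b
    obtain ⟨q2, inp2, pd2⟩ := c
    exact simStep M D hL2 hstep (le_trans (le_max_right _ _) hL1)

/-- the drain phase -/
lemma drainRun {u : List M.Δ} {L : ℕ} (hL : u.length + 1 ≤ L) (inp : List σ) :
    ∀ (pd' : List (Γ' M)), pd'.length ≤ L →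
    Relation.ReflTransGen (CStep (NFM M D) (shape M u L))
      (drain M, inp, pd') (qacc M, inp, []) := by
  intro pd'
  induction pd' with
  | nil =>
    intro _
    exact Relation.ReflTransGen.single
      (CStep.bottom ((mem_trans' M).mpr ⟨none, Step'.drainAcc, rfl⟩) rfl)
  | cons g' pdt ih =>
    intro hlen
    obtain ⟨y, hy⟩ := shape_get_exists M hL (i := pdt.length) (by simp at hlen; omega)
    refine Relation.ReflTransGen.head
      (CStep.pop (M := NFM M D) (u := shape M u L) (a := none) (d := y) (g := g') (w := []) (pd := pdt)
        (inp := inp) (inp' := inp)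
        ((mem_trans' M).mpr ⟨none, Step'.drainPop y g', rfl⟩) hy rfl) ?_
    exact ih (by simp at hlen; omega)

/-- forward inclusion -/
lemma forward {u : List M.Δ} {w : List σ} {q : M.Q} {pd : List M.Γ}
    (hu : u ∈ D.accepts) (hq : q ∈ M.accept)
    (hrun : Relation.ReflTransGen (CStep M u) (M.start, w, []) (q, [], pd)) :
    w ∈ (NFM M D).lang := by
  obtain ⟨L₀, hsim⟩ := simRun M D hrun
  obtain ⟨L, hL1, hL2, hL3⟩ : ∃ L, L₀ ≤ L ∧ u.length + 1 ≤ L ∧ pd.length + 1 ≤ L :=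
    ⟨L₀ + u.length + pd.length + 1, by omega, by omega, by omega⟩
  have hrun' := hsim L hL1 hL2
  simp only at hrun'
  have hdrain : Relation.ReflTransGen (CStep (NFM M D) (shape M u L))
      (Sum.inl q, ([] : List σ), pd.map some) (qacc M, [], []) := by
    cases pd with
    | nil =>
      exact Relation.ReflTransGen.single
        (CStep.bottom ((mem_trans' M).mpr ⟨none, Step'.accEnter hq, rfl⟩) rfl)
    | cons g pdt =>
      obtain ⟨y, hy⟩ := shape_get_exists M hL2 (i := pdt.length)
        (by simp at hL3; omega)
      refine Relation.ReflTransGen.head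
        (CStep.pop (M := NFM M D) (u := shape M u L) (a := none) (d := y) (g := some g) (w := []) (pd := pdt.map some)
          (inp := ([] : List σ)) (inp' := ([] : List σ))
          ((mem_trans' M).mpr ⟨none, Step'.accPop hq y (some g), rfl⟩)
          (by simpa using hy) rfl) ?_
      exact drainRun M D hL2 [] (pdt.map some) (by simp at hL3 ⊢; omega)
  exact ⟨shape M u L, shape_mem_accepts M D hu hL2, qacc M, rfl, [],
    Relation.ReflTransGen.trans hrun' hdrain⟩

/-! ### reverse simulation -/

def Inv (u : List M.Δ) (w₀ : List σ) : (Q' M × List σ × List (Γ' M)) → Prop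
  | (Sum.inl q, inp, pd') => ∃ pd, pd' = pd.map some ∧ M.Reaches u w₀ (q, inp, pd)
  | (Sum.inr (Sum.inl (q, rw)), inp, pd') =>
      (rw.val = [] ∧ ∃ pd, pd' = none :: pd.map some ∧ M.Reaches u w₀ (q, inp, pd)) ∨
      (rw.val ≠ [] ∧ ∃ pd, pd' = pd.map some ∧
        M.Reaches u w₀ (q, inp, rw.val.reverse ++ pd))
  | (Sum.inr (Sum.inr _), inp, _) => ∃ q ∈ M.accept, ∃ pd, M.Reaches u w₀ (q, inp, pd)

lemma inv_tgt {u : List M.Δ} {w₀ : List σ} (q₀ : M.Q) (rw : BW M) (pd : List M.Γ)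
    (inp' : List σ) (hre : M.Reaches u w₀ (q₀, inp', rw.val.reverse ++ pd)) :
    Inv M u w₀ (tgt M q₀ rw, inp', fl M rw :: pd.map some) := by
  rcases hval : rw.val with _ | ⟨x, rest⟩
  · rw [tgt_of_nil M q₀ rw hval]
    refine Or.inl ⟨hval, pd, ?_, ?_⟩
    · rw [fl, hval]; rfl
    · rw [hval] at hre; simpa using hre
  · by_cases hrest : rest = []
    · subst hrest
      rw [tgt_of_single M q₀ rw (by rw [hval]; rfl) (by rw [hval]; simp)]
      refine ⟨x :: pd, ?_, ?_⟩
      · rw [fl, hval]; rfl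
      · rw [hval] at hre; simpa using hre
    · rw [tgt_of_cons M q₀ rw (by rw [hval]; simpa using hrest)]
      refine Or.inr ⟨by show rw.val.tail ≠ []; rw [hval]; simpa using hrest,
        x :: pd, ?_, ?_⟩
      · rw [fl, hval]; rfl
      · show M.Reaches u w₀ (q₀, inp', rw.val.tail.reverse ++ (x :: pd))
        rw [hval] at hre ⊢
        simp only [List.reverse_cons, List.tail_cons] at hre ⊢
        rw [List.append_assoc] at hre
        simpa using hre

lemma invariant {u : List M.Δ} {k : ℕ} {w₀ : List σ}
    {c : (NFM M D).Q × List σ × List (NFM M D).Γ}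
    (hrun : Relation.ReflTransGen (CStep (NFM M D) (W M u k))
      (Sum.inl M.start, w₀, []) c) :
    Inv M u w₀ c := by
  induction hrun with
  | refl => exact ⟨[], rfl, Relation.ReflTransGen.refl⟩
  | tail hs hstep ih =>
    clear hs
    cases hstep with
    | bottom ht hr =>
      obtain ⟨vv, hS, hv⟩ := (mem_trans' M).mp ht
      simp only at hv
      cases hS with
      | startBottom ht₀ rw hrw =>
        obtain ⟨pd, hpd, hre⟩ := ih
        obtain rfl : pd = [] := by simpa using hpd.symm
        rw [← hv]
        exact inv_tgt M _ rw [] _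
          (by rw [hrw]; simpa [CSPD.Reaches] using hre.tail (CStep.bottom ht₀ hr))
      | startBlindB ht₀ rw hrw =>
        obtain ⟨pd, hpd, hre⟩ := ih
        obtain rfl : pd = [] := by simpa using hpd.symm
        rw [← hv]
        exact inv_tgt M _ rw [] _
          (by rw [hrw]; simpa [CSPD.Reaches] using hre.tail (CStep.blind ht₀ hr))
      | midB rw hne =>
        obtain rfl : _ = _ := hr
        rcases ih with ⟨-, pd, hpd, -⟩ | ⟨-, pd, hpd, hre⟩
        · exact absurd hpd (by simp)
        · obtain rfl : pd = [] := by simpa using hpd.symm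
          rw [← hv]
          exact inv_tgt M _ rw [] _ hre
      | accEnter hf =>
        obtain rfl : _ = _ := hr
        obtain ⟨pd, -, hre⟩ := ih
        exact ⟨_, hf, pd, hre⟩
      | drainAcc =>
        obtain rfl : _ = _ := hr
        obtain ⟨q1, hq1, pd, hre⟩ := ih
        exact ⟨q1, hq1, pd, hre⟩
    | pop ht hd hr =>
      obtain ⟨vv, hS, hv⟩ := (mem_trans' M).mp ht
      simp only at hv
      cases hS with
      | startBlindP ht₀ rw hrw y g₂ =>
        obtain ⟨pd, hpd, hre⟩ := ih
        cases pd with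
        | nil => simp at hpd
        | cons g0 pdt =>
          rw [List.map_cons] at hpd
          injection hpd with h1 h2
          subst h1
          subst h2
          rw [← hv]
          exact inv_tgt M _ rw (g0 :: pdt) _
            (by rw [hrw]; simpa [CSPD.Reaches] using hre.tail (CStep.blind ht₀ hr))
      | startPair0 ht₀ hw b =>
        obtain ⟨pd, hpd, hre⟩ := ih
        cases pd with
        | nil => simp at hpd
        | cons g0 pdt =>
          rw [List.map_cons] at hpd
          injection hpd with h1 h2
          injection h1 with h1
          subst h1
          subst h2
          have hd2 := W_get_some M (by simpa using hd)
          rw [← hv]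
          refine ⟨pdt, by simp [decodeV], ?_⟩
          have := hre.tail (CStep.pop ht₀ hd2 hr)
          rw [hw] at this
          simpa [CSPD.Reaches] using this
      | startPair1 ht₀ rw hrw hne b =>
        obtain ⟨pd, hpd, hre⟩ := ih
        cases pd with
        | nil => simp at hpd
        | cons g0 pdt =>
          rw [List.map_cons] at hpd
          injection hpd with h1 h2
          injection h1 with h1
          subst h1
          subst h2
          have hd2 := W_get_some M (by simpa using hd)
          rw [← hv]
          refine Or.inr ⟨hne, pdt, by simp [decodeV], ?_⟩
          rw [hrw]
          simpa [CSPD.Reaches] using hre.tail (CStep.pop ht₀ hd2 hr)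
      | midP rw hne y g₂ =>
        obtain rfl : _ = _ := hr
        rcases ih with ⟨h0, -⟩ | ⟨-, pd, hpd, hre⟩
        · exact absurd h0 hne
        · cases pd with
          | nil => simp at hpd
          | cons g0 pdt =>
            rw [List.map_cons] at hpd
            injection hpd with h1 h2
            subst h1
            subst h2
            rw [← hv]
            exact inv_tgt M _ rw (g0 :: pdt) _ hre
      | midPop rw he y =>
        obtain rfl : _ = _ := hr
        rcases ih with ⟨-, pd, hpd, hre⟩ | ⟨hne, -⟩
        · injection hpd with h1 h2
          subst h2
          rw [← hv]
          exact ⟨pd, by simp [decodeV], hre⟩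
        · exact absurd he hne
      | accPop hf y g₂ =>
        obtain rfl : _ = _ := hr
        obtain ⟨pd, -, hre⟩ := ih
        exact ⟨_, hf, pd, hre⟩
      | drainPop y g₂ =>
        obtain rfl : _ = _ := hr
        exact ih
    | blind ht hr =>
      obtain ⟨vv, hS, hv⟩ := (mem_trans' M).mp ht
      exact absurd hS (step'_no_blind M)

/-- backward inclusion -/
lemma backward (hD : D.accepts = M.checkLang) {w : List σ}
    (hw : w ∈ (NFM M D).lang) : w ∈ M.lang := by
  obtain ⟨u'', hu'', q', hq', pd', hrun⟩ := hw
  rw [NFM_check, mem_accepts_D'] at hu''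
  obtain ⟨u, k, hfm, hu⟩ := hu''
  rw [show u.map (emb M) ++ List.replicate k (pad M) ++ [mark M] = W M u k from rfl] at hfm
  subst hfm
  have hinv := invariant M D hrun
  have hq'' : q' = qacc M := hq'
  subst hq''
  obtain ⟨q, hq, pd, hre⟩ := hinv
  exact ⟨u, hD ▸ hu, q, hq, pd, hre⟩

end NF


/-- Normal form for cspd automata: every cspd automaton is equivalent to one in which
(1) the pushdown is never higher than the check-stack, (2) there is a single accepting
state, (3) the pushdown is empty upon entering the accepting state, (4) transitions to
the accepting state do not modify the pushdown, and (5) every other transition pushes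
exactly one letter or pops exactly one letter. -/
theorem cspd_normal_form (σ : Type) [Fintype σ] (M : CSPD σ) :
    ∃ M' : CSPD σ, M'.lang = M.lang ∧
      (∀ u ∈ M'.checkLang, ∀ (w : List σ) (c : M'.Q × List σ × List M'.Γ),
        M'.Reaches u w c → c.2.2.length ≤ u.length) ∧
      (∃ qacc : M'.Q, M'.accept = {qacc}) ∧
      (∀ u ∈ M'.checkLang, ∀ (w : List σ) (c : M'.Q × List σ × List M'.Γ),
        M'.Reaches u w c → c.1 ∈ M'.accept → c.2.2 = []) ∧
      (∀ (p : M'.Q) (a : Option σ) (o : Obs M'.Δ M'.Γ) (q : M'.Q) (v : List M'.Γ),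
        ((p, a, o), (q, v)) ∈ M'.trans → q ∈ M'.accept →
          (o = Obs.bottom → v = []) ∧
          (∀ d g, o = Obs.pair d g → v = [g]) ∧
          (o = Obs.blind → v = [])) ∧
      (∀ (p : M'.Q) (a : Option σ) (o : Obs M'.Δ M'.Γ) (q : M'.Q) (v : List M'.Γ),
        ((p, a, o), (q, v)) ∈ M'.trans → q ∉ M'.accept →
          (o = Obs.bottom → v.length = 1) ∧
          (∀ d g, o = Obs.pair d g → (v = [] ∨ ∃ x, v = [x, g])) ∧
          (o = Obs.blind → v.length = 1)) := by
  classical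
  obtain ⟨S, finS, D, hD⟩ := M.check_regular
  haveI := finS
  refine ⟨NF.NFM M D, ?_, ?_, ⟨NF.qacc M, rfl⟩, ?_, ?_, ?_⟩
  · ext w
    constructor
    · exact fun hw => NF.backward M D hD hw
    · rintro ⟨u, hu, q, hq, pd, hrun⟩
      exact NF.forward M D (by rw [hD]; exact hu) hq hrun
  · intro u hu w c h
    exact NF.cond1 M D hu h
  · intro u hu w c h hacc
    exact NF.cond3 M D h hacc
  · exact NF.cond4 M D
  · exact NF.cond5 M D
end
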